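/- arXiv:math/9906175 — 5 statements merged into one kernel-verified Lean document; each statement's English description precedes it below -/
import Mathlib

section
/- Let K be a dyadic local field with 2O = p^m. A unit ε ∈ O^× generates the unramified quadratic extension of K upon adjoining its square root if and only if ε is not a square in K and the congruence ε ≡ a^2 (mod p^{2m}) is solvable in O. -/
open Polynomial
set_option linter.unusedSectionVars false

section Aux

variable {O : Type*} [CommRing O] [IsDomain O] [IsDiscreteValuationRing O]
    {K : Type*} [Field K] [Algebra O K] [IsFractionRing O K] [CharZero K]
    {F : Type*} [Field F] [Algebra K F] [Algebra O F] [IsScalarTower O K F]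
    {ε : Oˣ} {s : F}

lemma aux_iota (d : O) : algebraMap O F d = algebraMap K F (algebraMap O K d) :=
  IsScalarTower.algebraMap_apply O K F d

lemma aux_ss (hs : s ^ 2 = algebraMap O F (ε : O)) :
    s * s = algebraMap K F (algebraMap O K (ε : O)) := by
  rw [← pow_two, hs, aux_iota (O := O) (K := K) (F := F)]

lemma sq_of_mem (hs : s ^ 2 = algebraMap O F (ε : O)) {b : K}
    (hb : algebraMap K F b = s) : b ^ 2 = algebraMap O K (ε : O) := by
  have : algebraMap K F (b ^ 2) = algebraMap K F (algebraMap O K (ε : O)) := by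
    rw [map_pow, hb, hs, aux_iota (O := O) (K := K) (F := F)]
  exact (algebraMap K F).injective this

lemma rep_exists (hs : s ^ 2 = algebraMap O F (ε : O))
    (hgen : Algebra.adjoin K {s} = ⊤) (x : F) :
    ∃ α β : K, x = algebraMap K F α + algebraMap K F β * s := by
  have hss := aux_ss (K := K) hs
  let T : Subalgebra K F :=
  { carrier := {x | ∃ α β : K, x = algebraMap K F α + algebraMap K F β * s}
    mul_mem' := by
      rintro a b ⟨α, β, rfl⟩ ⟨α', β', rfl⟩
      refine ⟨α * α' + β * β' * algebraMap O K (ε : O), α * β' + α' * β, ?_⟩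
      simp only [map_add, map_mul]
      linear_combination (algebraMap K F β * algebraMap K F β') * hss
    one_mem' := ⟨1, 0, by simp⟩
    add_mem' := by
      rintro a b ⟨α, β, rfl⟩ ⟨α', β', rfl⟩
      exact ⟨α + α', β + β', by simp only [map_add]; ring⟩
    zero_mem' := ⟨0, 0, by simp⟩
    algebraMap_mem' := fun r => ⟨r, 0, by simp⟩ }
  have hT : Algebra.adjoin K {s} ≤ T := by
    apply Algebra.adjoin_le
    rintro y rfl
    exact ⟨0, 1, by simp⟩
  exact hT (hgen ▸ Algebra.mem_top)

lemma indep (hs : s ^ 2 = algebraMap O F (ε : O))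
    (hns : ¬ ∃ b : K, b ^ 2 = algebraMap O K (ε : O)) {α β : K}
    (h : algebraMap K F α + algebraMap K F β * s = 0) : α = 0 ∧ β = 0 := by
  have hβ : β = 0 := by
    by_contra hβ
    apply hns
    refine ⟨-α / β, sq_of_mem hs ?_⟩
    have hβ' : algebraMap K F β ≠ 0 := by
      simpa using (algebraMap K F).injective.ne hβ
    rw [map_div₀, map_neg, eq_comm, eq_div_iff hβ']
    linear_combination h
  refine ⟨?_, hβ⟩
  rw [hβ, map_zero, zero_mul, add_zero] at h
  exact (algebraMap K F).injective (by simpa using h)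


lemma int_descend {y : K} (h : IsIntegral O (algebraMap K F y)) :
    ∃ d : O, algebraMap O K d = y :=
  IsIntegrallyClosed.isIntegral_iff.mp
    ((isIntegral_algebraMap_iff (algebraMap K F).injective).mp h)

lemma minpoly_eq (hs : s ^ 2 = algebraMap O F (ε : O))
    (hns : ¬ ∃ b : K, b ^ 2 = algebraMap O K (ε : O)) {x : F} {α β : K} (hβ : β ≠ 0)
    (hx : x = algebraMap K F α + algebraMap K F β * s) :
    minpoly K x = X ^ 2 + C (-(2 * α)) * X + C (α ^ 2 - β ^ 2 * algebraMap O K (ε : O)) := by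
  have hss := aux_ss (K := K) hs
  set q : K[X] := X ^ 2 + C (-(2 * α)) * X + C (α ^ 2 - β ^ 2 * algebraMap O K (ε : O)) with hq
  have hdeglt : (C (-(2 * α)) * X + C (α ^ 2 - β ^ 2 * algebraMap O K (ε : O))).degree <
      ((2 : ℕ) : WithBot ℕ) :=
    lt_of_le_of_lt (Polynomial.degree_linear_le) (by norm_num)
  have hqm : q.Monic := by
    rw [hq, add_assoc]
    exact Polynomial.monic_X_pow_add hdeglt
  have hq0 : Polynomial.aeval x q = 0 := by
    rw [hq, hx]
    simp only [map_add, map_mul, map_pow, map_neg, map_sub, aeval_X, aeval_C, map_ofNat]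
    linear_combination (algebraMap K F β)^2 * hss
  have hxint : IsIntegral K x := ⟨q, hqm, hq0⟩
  have hdvd := minpoly.dvd K x hq0
  have hqdeg : q.natDegree = 2 := by
    have : q.degree = 2 := by
      rw [hq, add_assoc]
      rw [Polynomial.degree_add_eq_left_of_degree_lt (by simpa using hdeglt)]
      exact Polynomial.degree_X_pow 2
    exact Polynomial.natDegree_eq_of_degree_eq_some this
  have hqne : q ≠ 0 := hqm.ne_zero
  have hple : (minpoly K x).natDegree ≤ 2 := hqdeg ▸ Polynomial.natDegree_le_of_dvd hdvd hqne
  have hppos : 0 < (minpoly K x).natDegree := minpoly.natDegree_pos hxint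
  have hpm : (minpoly K x).Monic := minpoly.monic hxint
  have hpne1 : (minpoly K x).natDegree ≠ 1 := by
    intro h1
    have hXC := hpm.eq_X_add_C h1
    have := minpoly.aeval K x
    rw [hXC] at this
    simp only [map_add, aeval_X, aeval_C] at this
    have h0 : algebraMap K F (α + (minpoly K x).coeff 0) + algebraMap K F β * s = 0 := by
      rw [map_add]; linear_combination this - hx
    exact hβ (indep hs hns h0).2
  have hpdeg : (minpoly K x).natDegree = 2 := by omega
  obtain ⟨r, hr⟩ := hdvd
  have hpne : minpoly K x ≠ 0 := hpm.ne_zero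
  have hrne : r ≠ 0 := by rintro rfl; rw [mul_zero] at hr; exact hqne hr
  have hrdeg : r.natDegree = 0 := by
    have := Polynomial.natDegree_mul hpne hrne
    rw [← hr, hqdeg, hpdeg] at this
    omega
  have hrC := Polynomial.eq_C_of_natDegree_eq_zero hrdeg
  have hrlc : r.coeff 0 = 1 := by
    have h1 : q.leadingCoeff = (minpoly K x).leadingCoeff * r.leadingCoeff :=
      hr ▸ Polynomial.leadingCoeff_mul _ _
    rw [hqm.leadingCoeff, hpm.leadingCoeff, one_mul] at h1
    rw [Polynomial.leadingCoeff, hrdeg] at h1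
    exact h1.symm
  rw [hr, hrC, hrlc, Polynomial.C_1, mul_one]

lemma two_coords (hs : s ^ 2 = algebraMap O F (ε : O))
    (hns : ¬ ∃ b : K, b ^ 2 = algebraMap O K (ε : O)) {x : F} (hxint : IsIntegral O x)
    {α β : K} (hx : x = algebraMap K F α + algebraMap K F β * s) :
    (∃ u : O, algebraMap O K u = 2 * α) ∧ (∃ v : O, algebraMap O K v = 2 * β) := by
  by_cases hβ : β = 0
  · subst hβ
    rw [map_zero, zero_mul, add_zero] at hx
    subst hx
    obtain ⟨d, hd⟩ := int_descend (O := O) hxint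
    exact ⟨⟨2 * d, by rw [map_mul, hd, map_ofNat]⟩, ⟨0, by rw [map_zero, mul_zero]⟩⟩
  · have hmp := minpoly_eq hs hns hβ hx
    have hmp2 := minpoly.isIntegrallyClosed_eq_field_fractions' K hxint
    set P : O[X] := minpoly O x with hP
    have hco1 : algebraMap O K (P.coeff 1) = -(2 * α) := by
      have h := congrArg (fun p => Polynomial.coeff p 1) (hmp2.symm.trans hmp)
      simp only [Polynomial.coeff_map] at h
      rw [h]
      simp only [Polynomial.coeff_add, Polynomial.coeff_X_pow, Polynomial.coeff_C_mul,
        Polynomial.coeff_X_one, Polynomial.coeff_C]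
      norm_num
    have hco0 : algebraMap O K (P.coeff 0) = α ^ 2 - β ^ 2 * algebraMap O K (ε : O) := by
      have h := congrArg (fun p => Polynomial.coeff p 0) (hmp2.symm.trans hmp)
      simp only [Polynomial.coeff_map] at h
      rw [h]
      simp only [Polynomial.coeff_add, Polynomial.coeff_X_pow, Polynomial.coeff_C_mul,
        Polynomial.coeff_X_zero, Polynomial.coeff_C]
      norm_num
    refine ⟨⟨-(P.coeff 1), by rw [map_neg, hco1, neg_neg]⟩, ?_⟩
    have hsq : (2 * β) ^ 2 = algebraMap O K ((P.coeff 1 ^ 2 - 4 * P.coeff 0) * ((ε⁻¹ : Oˣ) : O)) := by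
      have hinv : algebraMap O K ((ε⁻¹ : Oˣ) : O) * algebraMap O K (ε : O) = 1 := by
        rw [← map_mul, Units.inv_mul, map_one]
      simp only [map_mul, map_sub, map_pow, map_ofNat, hco1, hco0]
      linear_combination (-(4 * β^2)) * hinv
    have hint : IsIntegral O (2 * β) := by
      refine ⟨X ^ 2 - C ((P.coeff 1 ^ 2 - 4 * P.coeff 0) * ((ε⁻¹ : Oˣ) : O)),
        Polynomial.monic_X_pow_sub_C _ (by norm_num), ?_⟩
      simp only [Polynomial.eval₂_sub, Polynomial.eval₂_X_pow, Polynomial.eval₂_C]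
      rw [← hsq, sub_self]
    exact IsIntegrallyClosed.isIntegral_iff.mp hint

lemma half_rep (hs : s ^ 2 = algebraMap O F (ε : O))
    (hns : ¬ ∃ b : K, b ^ 2 = algebraMap O K (ε : O))
    (hgen : Algebra.adjoin K {s} = ⊤) {x : F} (hxint : IsIntegral O x) :
    ∃ u v : O, 2 * x = algebraMap O F u + algebraMap O F v * s := by
  obtain ⟨α, β, hx⟩ := rep_exists hs hgen x
  obtain ⟨⟨u, hu⟩, ⟨v, hv⟩⟩ := two_coords hs hns hxint hx
  refine ⟨u, v, ?_⟩
  rw [aux_iota (O := O) (K := K) (F := F), aux_iota (O := O) (K := K) (F := F), hu, hv,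
    map_mul, map_mul, hx, map_ofNat]
  ring

lemma finrank_two (hs : s ^ 2 = algebraMap O F (ε : O))
    (hns : ¬ ∃ b : K, b ^ 2 = algebraMap O K (ε : O))
    (hgen : Algebra.adjoin K {s} = ⊤) : Module.finrank K F = 2 := by
  have hli : LinearIndependent K ![(1 : F), s] := by
    rw [Fintype.linearIndependent_iff]
    intro g hg
    rw [Fin.sum_univ_two] at hg
    simp only [Matrix.cons_val_zero, Matrix.cons_val_one, Matrix.head_cons] at hg
    rw [Algebra.smul_def, Algebra.smul_def, mul_one] at hg
    have := indep hs hns hg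
    intro i; fin_cases i <;> simp [this.1, this.2]
  have hsp : ⊤ ≤ Submodule.span K (Set.range ![(1 : F), s]) := by
    intro x _
    obtain ⟨α, β, hx⟩ := rep_exists hs hgen x
    have : Set.range ![(1 : F), s] = {1, s} := by
      simp [Matrix.range_cons, Matrix.range_empty, Set.pair_comm]
    rw [this, Submodule.mem_span_pair]
    exact ⟨α, β, by rw [Algebra.smul_def, Algebra.smul_def, mul_one, ← hx]⟩
  let b : Module.Basis (Fin 2) K F := Module.Basis.mk hli hsp
  rw [Module.finrank_eq_card_basis b, Fintype.card_fin]

lemma nonsquare_of_finrank (hs : s ^ 2 = algebraMap O F (ε : O))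
    (hgen : Algebra.adjoin K {s} = ⊤) (h2 : Module.finrank K F = 2) :
    ¬ ∃ b : K, b ^ 2 = algebraMap O K (ε : O) := by
  rintro ⟨b, hb⟩
  have hzero : (s - algebraMap K F b) * (s + algebraMap K F b) = 0 := by
    have hh : (algebraMap K F b) ^ 2 = s ^ 2 := by
      rw [← map_pow, hb, hs, aux_iota (O := O) (K := K) (F := F)]
    linear_combination -hh
  have hmem : ∃ b' : K, s = algebraMap K F b' := by
    rcases mul_eq_zero.mp hzero with h | h
    · exact ⟨b, by linear_combination h⟩
    · exact ⟨-b, by rw [map_neg]; linear_combination h⟩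
  obtain ⟨b', hb'⟩ := hmem
  have hle : Algebra.adjoin K {s} ≤ ⊥ := by
    apply Algebra.adjoin_le
    rintro y rfl
    simp only [SetLike.mem_coe, Algebra.mem_bot]
    exact ⟨b', hb'.symm⟩
  have htop : (⊤ : Subalgebra K F) ≤ ⊥ := hgen ▸ hle
  have hbot : (⊥ : Subalgebra K F) = ⊤ := eq_top_iff.mpr htop
  have := Subalgebra.bot_eq_top_iff_finrank_eq_one.mp hbot
  omega

end Aux



section Abstract

variable {R A : Type*} [CommRing R] [CommRing A] [Algebra R A]

lemma formallyUnramified_of_quadratic_gen (w : A) (a c : R)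
    (hw2 : w * w = algebraMap R A a * w + algebraMap R A c)
    (hgu : IsUnit (2 * w - algebraMap R A a))
    (hrep : ∀ x : A, ∃ d e : R, x = algebraMap R A d + algebraMap R A e * w) :
    Algebra.FormallyUnramified R A := by
  constructor
  have hDw : (KaehlerDifferential.D R A) w = 0 := by
    have h1 := (KaehlerDifferential.D R A).leibniz w w
    have h2 : (KaehlerDifferential.D R A) (w * w) =
        algebraMap R A a • (KaehlerDifferential.D R A) w := by
      rw [hw2, map_add, Derivation.map_algebraMap, add_zero, Derivation.leibniz,
        Derivation.map_algebraMap, smul_zero, add_zero]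
    have hrel : (2 * w - algebraMap R A a) • (KaehlerDifferential.D R A) w = 0 := by
      rw [sub_smul, two_mul, add_smul, ← h1, h2, sub_self]
    exact hgu.smul_eq_zero.mp hrel
  have hD0 : ∀ x : A, (KaehlerDifferential.D R A) x = 0 := by
    intro x
    obtain ⟨d, e, hx⟩ := hrep x
    rw [hx, map_add, Derivation.map_algebraMap, Derivation.leibniz,
      Derivation.map_algebraMap, hDw, smul_zero, smul_zero]
    abel
  refine subsingleton_of_forall_eq 0 fun x => ?_
  have hxmem : x ∈ (⊤ : Submodule A (Ω[A⁄R])) := trivial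
  rw [← KaehlerDifferential.span_range_derivation] at hxmem
  have hr0 : Set.range (KaehlerDifferential.D R A) ⊆ {0} := by
    rintro y ⟨z, rfl⟩
    exact hD0 z
  have := Submodule.span_mono (R := A) hr0 hxmem
  simpa using this

lemma not_formallyUnramified_of_quadratic_gen (w : A) (u₀ c₀ : R)
    (hw2 : w * w = algebraMap R A c₀ + algebraMap R A u₀ * w)
    (hgnu : ¬ IsUnit (2 * w - algebraMap R A u₀))
    (hrep : ∀ x : A, ∃ d e : R, x = algebraMap R A d + algebraMap R A e * w)
    (huniq : ∀ d e : R, algebraMap R A d + algebraMap R A e * w = 0 → d = 0 ∧ e = 0) :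
    ¬ Algebra.FormallyUnramified R A := by
  intro hur
  have li : LinearIndependent R ![(1 : A), w] := by
    rw [Fintype.linearIndependent_iff]
    intro g hg
    rw [Fin.sum_univ_two] at hg
    simp only [Matrix.cons_val_zero, Matrix.cons_val_one, Matrix.head_cons] at hg
    rw [Algebra.smul_def, Algebra.smul_def, mul_one] at hg
    have := huniq _ _ hg
    intro i; fin_cases i <;> simp [this.1, this.2]
  have hsp : ⊤ ≤ Submodule.span R (Set.range ![(1 : A), w]) := by
    intro x _
    obtain ⟨d, e, hx⟩ := hrep x
    have hrange : Set.range ![(1 : A), w] = {1, w} := by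
      simp [Matrix.range_cons, Matrix.range_empty, Set.pair_comm]
    rw [hrange, Submodule.mem_span_pair]
    exact ⟨d, e, by rw [Algebra.smul_def, Algebra.smul_def, mul_one, ← hx]⟩
  let bA : Module.Basis (Fin 2) R A := Module.Basis.mk li hsp
  let φ : A →ₗ[R] R := bA.coord 1
  have hb0 : bA 0 = 1 := by rw [Module.Basis.mk_apply]; rfl
  have hb1 : bA 1 = w := by rw [Module.Basis.mk_apply]; rfl
  have hφ : ∀ d e : R, φ (algebraMap R A d + algebraMap R A e * w) = e := by
    intro d e
    have hcombo : algebraMap R A d + algebraMap R A e * w = d • bA 0 + e • bA 1 := by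
      rw [hb0, hb1, Algebra.algebraMap_eq_smul_one, ← Algebra.smul_def]
    rw [hcombo, map_add, map_smul, map_smul, Module.Basis.coord_apply, Module.Basis.coord_apply,
      Module.Basis.repr_self, Module.Basis.repr_self]
    simp [Finsupp.single_apply]
  set Iq : Ideal A := Ideal.span {2 * w - algebraMap R A u₀} with hIqdef
  have hIqne : Iq ≠ ⊤ := fun h => hgnu (Ideal.span_singleton_eq_top.mp h)
  haveI := Ideal.Quotient.nontrivial_iff.mpr hIqne
  have hmkalg : ∀ r : R, algebraMap R (A ⧸ Iq) r =
      Ideal.Quotient.mk Iq (algebraMap R A r) := by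
    intro r
    rw [IsScalarTower.algebraMap_apply R A (A ⧸ Iq), Ideal.Quotient.algebraMap_eq]
  have hkey : ∀ (r : R) (x : A),
      x • (algebraMap R (A ⧸ Iq) r) = Ideal.Quotient.mk Iq (x * algebraMap R A r) := by
    intro r x
    rw [hmkalg, ← Ideal.Quotient.mk_eq_mk, ← Submodule.Quotient.mk_smul, smul_eq_mul,
      Ideal.Quotient.mk_eq_mk]
  let L : A →ₗ[R] (A ⧸ Iq) := (Algebra.linearMap R (A ⧸ Iq)).comp φ
  have hL : ∀ x, L x = algebraMap R (A ⧸ Iq) (φ x) := fun x => rfl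
  let D : Derivation R A (A ⧸ Iq) :=
  { toLinearMap := L
    map_one_eq_zero' := by
      have h1 : (1 : A) = algebraMap R A 1 + algebraMap R A 0 * w := by simp
      show L 1 = 0
      rw [hL, h1, hφ, map_zero]
    leibniz' := by
      intro x y
      obtain ⟨d, e, hx⟩ := hrep x
      obtain ⟨d', e', hy⟩ := hrep y
      have hxy : x * y = algebraMap R A (d * d' + e * e' * c₀) +
          algebraMap R A (d * e' + d' * e + e * e' * u₀) * w := by
        rw [hx, hy]
        simp only [map_add, map_mul]
        linear_combination (algebraMap R A e * algebraMap R A e') * hw2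
      have hφxy : φ (x * y) = d * e' + d' * e + e * e' * u₀ := by rw [hxy]; exact hφ _ _
      have hφx : φ x = e := by rw [hx]; exact hφ _ _
      have hφy : φ y = e' := by rw [hy]; exact hφ _ _
      show L (x * y) = x • L y + y • L x
      rw [hL, hL, hL, hφxy, hφx, hφy, hkey, hkey, hmkalg, ← map_add, Ideal.Quotient.eq]
      rw [hIqdef, Ideal.mem_span_singleton]
      refine ⟨-(algebraMap R A e * algebraMap R A e'), ?_⟩
      rw [hx, hy]
      simp only [map_add, map_mul]
      ring }
  have hDw : D w = algebraMap R (A ⧸ Iq) 1 := by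
    show L w = algebraMap R (A ⧸ Iq) 1
    rw [hL]
    congr 1
    have h1 : w = algebraMap R A 0 + algebraMap R A 1 * w := by simp
    rw [h1]
    exact hφ 0 1
  haveI hsub := hur
  have h0 : D w = 0 := by
    rw [← Derivation.liftKaehlerDifferential_comp_D D w]
    have hz : (KaehlerDifferential.D R A) w = 0 := Subsingleton.elim _ _
    rw [hz, map_zero]
  rw [hDw, map_one] at h0
  exact one_ne_zero h0

end Abstract

set_option maxHeartbeats 1000000
set_option synthInstance.maxHeartbeats 400000

/-- Let `K` be a dyadic local field with `2O = p^m`.  A unit `ε ∈ O^×`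
generates the unramified quadratic extension of `K` upon adjoining its square root if and
only if `ε` is not a square in `K` and the congruence `ε ≡ a^2 (mod p^(2m))` is solvable
in `O`.  Here the extension `F = K(√ε)` being unramified quadratic is expressed as
`[F : K] = 2` together with formal unramifiedness of the extension of integer rings. -/
theorem sqrt_unit_unramified_iff
    (O : Type*) [CommRing O] [IsDomain O] [IsDiscreteValuationRing O]
    [IsAdicComplete (IsLocalRing.maximalIdeal O) O]
    (K : Type*) [Field K] [Algebra O K] [IsFractionRing O K] [CharZero K]
    (m : ℕ) (hm1 : 1 ≤ m)
    (hm : Ideal.span {(2 : O)} = (IsLocalRing.maximalIdeal O) ^ m)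
    (F : Type*) [Field F] [Algebra K F] [Algebra O F] [IsScalarTower O K F]
    (ε : Oˣ) (s : F) (hs : s ^ 2 = algebraMap O F (ε : O))
    (hgen : Algebra.adjoin K {s} = ⊤) :
    (Module.finrank K F = 2 ∧ Algebra.FormallyUnramified O (integralClosure O F)) ↔
      ((¬ ∃ b : K, b ^ 2 = algebraMap O K (ε : O)) ∧
        ∃ a : O, (ε : O) - a ^ 2 ∈ (IsLocalRing.maximalIdeal O) ^ (2 * m)) := by
  classical
  haveI : CharZero F := (RingHom.charZero_iff (algebraMap K F).injective).mp inferInstance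
  have h2F : (2 : F) ≠ 0 := by norm_num
  have h4F : (4 : F) ≠ 0 := by norm_num
  have h4K : (4 : K) ≠ 0 := by norm_num
  have hιK : ∀ d : O, algebraMap O F d = algebraMap K F (algebraMap O K d) :=
    fun d => IsScalarTower.algebraMap_apply O K F d
  have hss : s * s = algebraMap K F (algebraMap O K (ε : O)) := aux_ss (K := K) hs
  have hss' : s * s = algebraMap O F (ε : O) := by rw [← pow_two, hs]
  have h2O : (2 : O) ≠ 0 := by
    intro h
    have h' : algebraMap O K 2 = 0 := by rw [h, map_zero]
    rw [map_ofNat] at h'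
    exact (by norm_num : (2 : K) ≠ 0) h'
  have hspan4 : (IsLocalRing.maximalIdeal O) ^ (2 * m) = Ideal.span {(4 : O)} := by
    rw [mul_comm 2 m, pow_mul, ← hm, Ideal.span_singleton_pow]
    have h22 : (2 : O) ^ 2 = 4 := by norm_num
    rw [h22]
  have hsint : IsIntegral O s := by
    refine ⟨Polynomial.X ^ 2 - Polynomial.C ((ε : O)),
      Polynomial.monic_X_pow_sub_C _ two_ne_zero, ?_⟩
    simp only [Polynomial.eval₂_sub, Polynomial.eval₂_X_pow, Polynomial.eval₂_C]
    rw [← hs, sub_self]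
  constructor
  · rintro ⟨h2, hur⟩
    have hns := nonsquare_of_finrank hs hgen h2
    refine ⟨hns, ?_⟩
    let I : Ideal O :=
    { carrier := {v | ∃ u : O, IsIntegral O ((algebraMap O F u + algebraMap O F v * s) / 2)}
      add_mem' := by
        rintro a b ⟨u, hu⟩ ⟨u', hu'⟩
        refine ⟨u + u', ?_⟩
        have h := hu.add hu'
        have e : (algebraMap O F (u + u') + algebraMap O F (a + b) * s) / 2 =
            (algebraMap O F u + algebraMap O F a * s) / 2 +
              (algebraMap O F u' + algebraMap O F b * s) / 2 := by
          rw [map_add, map_add]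
          ring
        show IsIntegral O ((algebraMap O F (u + u') + algebraMap O F (a + b) * s) / 2)
        rw [e]; exact h
      zero_mem' := ⟨0, by
        have : ((algebraMap O F 0 + algebraMap O F 0 * s) / 2 : F) = 0 := by
          rw [map_zero]; ring
        rw [this]; exact isIntegral_zero⟩
      smul_mem' := by
        rintro c x ⟨u, hu⟩
        refine ⟨c * u, ?_⟩
        have h := (isIntegral_algebraMap (x := c) (A := F)).mul hu
        have e : (algebraMap O F (c * u) + algebraMap O F (c * x) * s) / 2 =
            algebraMap O F c * ((algebraMap O F u + algebraMap O F x * s) / 2) := by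
          rw [map_mul, map_mul]
          ring
        show IsIntegral O ((algebraMap O F (c * u) + algebraMap O F (c • x) * s) / 2)
        rw [smul_eq_mul, e]; exact h }
    have h2I : (2 : O) ∈ I := by
      refine ⟨0, ?_⟩
      have : ((algebraMap O F 0 + algebraMap O F 2 * s) / 2 : F) = s := by
        rw [map_zero, map_ofNat, zero_add]
        exact mul_div_cancel_left₀ s h2F
      rw [this]; exact hsint
    obtain ⟨v₀, hv₀0⟩ := (IsPrincipalIdealRing.principal I).principal
    have hv₀ : I = Ideal.span {v₀} := hv₀0
    have hv₀I : v₀ ∈ I := by rw [hv₀]; exact Ideal.mem_span_singleton_self v₀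
    obtain ⟨u₀, hwint⟩ := hv₀I
    set w : F := (algebraMap O F u₀ + algebraMap O F v₀ * s) / 2 with hwdef
    have hv₀ne : v₀ ≠ 0 := by
      intro h0
      rw [hv₀, h0, Ideal.mem_span_singleton] at h2I
      exact h2O (zero_dvd_iff.mp h2I)
    have h2w : 2 * w = algebraMap O F u₀ + algebraMap O F v₀ * s := by
      rw [hwdef, mul_comm, div_mul_cancel₀ _ h2F]
    have e1 : 4 * (w * w - algebraMap O F u₀ * w) =
        (algebraMap O F v₀) ^ 2 * algebraMap O F (ε : O) - (algebraMap O F u₀) ^ 2 := by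
      linear_combination (2 * w + algebraMap O F v₀ * s - algebraMap O F u₀) * h2w +
        (algebraMap O F v₀) ^ 2 * hss'
    obtain ⟨c₀, hc₀⟩ : ∃ c₀ : O, v₀ ^ 2 * (ε : O) - u₀ ^ 2 = 4 * c₀ := by
      have hyint : IsIntegral O (w * w - algebraMap O F u₀ * w) :=
        (hwint.mul hwint).sub (isIntegral_algebraMap.mul hwint)
      have hy : w * w - algebraMap O F u₀ * w =
          algebraMap K F ((algebraMap O K (v₀ ^ 2 * (ε : O) - u₀ ^ 2)) / 4) := by
        rw [map_div₀, map_ofNat, ← hιK, eq_div_iff h4F]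
        simp only [map_sub, map_mul, map_pow]
        linear_combination e1
      rw [hy] at hyint
      obtain ⟨c₀, hc₀⟩ := int_descend (O := O) hyint
      refine ⟨c₀, ?_⟩
      have h9 : algebraMap O K (v₀ ^ 2 * (ε : O) - u₀ ^ 2) = algebraMap O K (4 * c₀) := by
        rw [map_mul, map_ofNat, hc₀, mul_div_cancel₀ _ h4K]
      exact IsFractionRing.injective O K h9
    by_cases hvu : IsUnit v₀
    · obtain ⟨V, hV⟩ := hvu
      have hVi : v₀ * (↑V⁻¹ : O) = 1 := by rw [← hV]; exact V.mul_inv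
      refine ⟨u₀ * (↑V⁻¹ : O), ?_⟩
      rw [hspan4, Ideal.mem_span_singleton]
      refine ⟨(↑V⁻¹ : O) ^ 2 * c₀, ?_⟩
      linear_combination ((↑V⁻¹ : O)) ^ 2 * hc₀ -
        (ε : O) * (v₀ * (↑V⁻¹ : O) + 1) * hVi
    · exfalso
      have hwC : w ∈ integralClosure O F := hwint
      set wC : ↥(integralClosure O F) := ⟨w, hwC⟩ with hwCdef
      have hcoe : ∀ d : O, ((algebraMap O ↥(integralClosure O F) d :
          ↥(integralClosure O F)) : F) = algebraMap O F d := fun d => rfl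
      have repC : ∀ x : ↥(integralClosure O F), ∃ d e : O,
          x = algebraMap O _ d + algebraMap O _ e * wC := by
        intro x
        have hxint : IsIntegral O (x : F) := x.2
        obtain ⟨u, v, huv⟩ := half_rep hs hns hgen hxint
        have hvI : v ∈ I := by
          refine ⟨u, ?_⟩
          have hxx : (algebraMap O F u + algebraMap O F v * s) / 2 = (x : F) := by
            rw [← huv, mul_div_cancel_left₀ _ h2F]
          rw [hxx]; exact hxint
        rw [hv₀, Ideal.mem_span_singleton] at hvI
        obtain ⟨e, he⟩ := hvI
        have hev : algebraMap O F v = algebraMap O F v₀ * algebraMap O F e := by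
          rw [← map_mul, he]
        have hxw : (x : F) - algebraMap O F e * w =
            algebraMap K F ((algebraMap O K (u - e * u₀)) / 2) := by
          rw [map_div₀, map_ofNat, ← hιK, eq_div_iff h2F]
          simp only [map_sub, map_mul]
          linear_combination huv - (algebraMap O F e) * h2w + s * hev
        have hxwint : IsIntegral O ((x : F) - algebraMap O F e * w) :=
          hxint.sub (isIntegral_algebraMap.mul hwint)
        rw [hxw] at hxwint
        obtain ⟨d, hd⟩ := int_descend (O := O) hxwint
        refine ⟨d, e, ?_⟩
        have h5 : algebraMap O F d = (x : F) - algebraMap O F e * w := by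
          rw [hιK d, hd, ← hxw]
        refine Subtype.ext ?_
        show (x : F) = algebraMap O F d + algebraMap O F e * w
        linear_combination -h5
      have uniqC : ∀ d e : O,
          algebraMap O ↥(integralClosure O F) d + algebraMap O _ e * wC = 0 →
          d = 0 ∧ e = 0 := by
        intro d e h
        have hF : algebraMap O F d + algebraMap O F e * w = 0 := congrArg Subtype.val h
        have hcomb : algebraMap K F (algebraMap O K (2 * d + e * u₀)) +
            algebraMap K F (algebraMap O K (e * v₀)) * s = 0 := by
          rw [← hιK, ← hιK]
          simp only [map_add, map_mul, map_ofNat]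
          linear_combination 2 * hF - (algebraMap O F e) * h2w
        have hind := indep hs hns hcomb
        have he0 : e * v₀ = 0 :=
          IsFractionRing.injective O K (by rw [hind.2, map_zero])
        have he : e = 0 := by
          rcases mul_eq_zero.mp he0 with h | h
          · exact h
          · exact absurd h hv₀ne
        refine ⟨?_, he⟩
        have hd0 : 2 * d + e * u₀ = 0 :=
          IsFractionRing.injective O K (by rw [hind.1, map_zero])
        rw [he, zero_mul, add_zero] at hd0
        rcases mul_eq_zero.mp hd0 with h | h
        · exact absurd h h2O
        · exact h
      have hw2F : w * w = algebraMap O F c₀ + algebraMap O F u₀ * w := by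
        have hc₀F : (algebraMap O F v₀) ^ 2 * algebraMap O F (ε : O) -
            (algebraMap O F u₀) ^ 2 = 4 * algebraMap O F c₀ := by
          have := congrArg (algebraMap O F) hc₀
          simp only [map_sub, map_mul, map_pow, map_ofNat] at this
          exact this
        apply mul_left_cancel₀ h4F
        linear_combination e1 + hc₀F
      have hw2C : wC * wC = algebraMap O ↥(integralClosure O F) c₀ +
          algebraMap O _ u₀ * wC := Subtype.ext hw2F
      set g : ↥(integralClosure O F) := 2 * wC - algebraMap O _ u₀ with hgdef
      have hgF : (g : F) = 2 * w - algebraMap O F u₀ := rfl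
      have hgsq : g * g = algebraMap O ↥(integralClosure O F) (v₀ ^ 2 * (ε : O)) := by
        refine Subtype.ext ?_
        show (2 * w - algebraMap O F u₀) * (2 * w - algebraMap O F u₀) =
          algebraMap O F (v₀ ^ 2 * (ε : O))
        simp only [map_mul, map_pow]
        linear_combination (2 * w + algebraMap O F v₀ * s - 2 * algebraMap O F u₀) * h2w +
          (algebraMap O F v₀) ^ 2 * hss'
      have hv₀εne : algebraMap O K (v₀ ^ 2 * (ε : O)) ≠ 0 := by
        intro h
        have : v₀ ^ 2 * (ε : O) = 0 := IsFractionRing.injective O K (by rw [h, map_zero])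
        rcases mul_eq_zero.mp this with h' | h'
        · exact hv₀ne (pow_eq_zero_iff two_ne_zero |>.mp h')
        · exact ε.ne_zero h'
      have hgnu : ¬ IsUnit g := by
        intro hg
        obtain ⟨y, hy⟩ := isUnit_iff_exists_inv.mp hg
        have h7 : algebraMap O ↥(integralClosure O F) (v₀ ^ 2 * (ε : O)) * (y * y) = 1 := by
          rw [← hgsq]
          linear_combination (g * y + 1) * hy
        have h7F : algebraMap O F (v₀ ^ 2 * (ε : O)) * ((y * y : ↥(integralClosure O F)) : F)
            = 1 := congrArg Subtype.val h7
        have hz : ((y * y : ↥(integralClosure O F)) : F) =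
            algebraMap K F ((algebraMap O K (v₀ ^ 2 * (ε : O)))⁻¹) := by
          rw [map_inv₀, ← hιK]
          exact eq_inv_of_mul_eq_one_right h7F
        have hyyint : IsIntegral O ((y * y : ↥(integralClosure O F)) : F) := (y * y).2
        rw [hz] at hyyint
        obtain ⟨d, hd⟩ := int_descend (O := O) hyyint
        have h8 : v₀ ^ 2 * (ε : O) * d = 1 := by
          apply IsFractionRing.injective O K
          rw [map_mul, hd, map_one, mul_inv_cancel₀ hv₀εne]
        exact hvu (IsUnit.of_mul_eq_one (v₀ * (ε : O) * d) (by linear_combination h8))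
      exact (not_formallyUnramified_of_quadratic_gen wC u₀ c₀ hw2C hgnu repC uniqC) hur
  · rintro ⟨hns, a, ha⟩
    refine ⟨finrank_two hs hns hgen, ?_⟩
    rw [hspan4, Ideal.mem_span_singleton] at ha
    obtain ⟨c, hc⟩ := ha
    set w : F := (algebraMap O F a + s) / 2 with hwdef
    have h2w : 2 * w = algebraMap O F a + s := by
      rw [hwdef, mul_comm, div_mul_cancel₀ _ h2F]
    have hcF : algebraMap O F (ε : O) - (algebraMap O F a) ^ 2 =
        4 * algebraMap O F c := by
      have := congrArg (algebraMap O F) hc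
      simp only [map_sub, map_mul, map_pow, map_ofNat] at this
      exact this
    have hw2F : w * w = algebraMap O F a * w + algebraMap O F c := by
      apply mul_left_cancel₀ h4F
      linear_combination (2 * w + s + algebraMap O F a) * h2w + hss' + hcF
    have hwint : IsIntegral O w := by
      refine ⟨Polynomial.X ^ 2 - (Polynomial.C a * Polynomial.X + Polynomial.C c),
        Polynomial.monic_X_pow_sub (lt_of_le_of_lt (Polynomial.degree_linear_le)
          (by norm_num)), ?_⟩
      simp only [Polynomial.eval₂_sub, Polynomial.eval₂_add, Polynomial.eval₂_mul,
        Polynomial.eval₂_X_pow, Polynomial.eval₂_X, Polynomial.eval₂_C]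
      rw [← pow_two] at hw2F
      rw [hw2F]; ring
    have hwC : w ∈ integralClosure O F := hwint
    set wC : ↥(integralClosure O F) := ⟨w, hwC⟩ with hwCdef
    have hcoe : ∀ d : O, ((algebraMap O ↥(integralClosure O F) d :
        ↥(integralClosure O F)) : F) = algebraMap O F d := fun d => rfl
    have repC : ∀ x : ↥(integralClosure O F), ∃ d e : O,
        x = algebraMap O _ d + algebraMap O _ e * wC := by
      intro x
      have hxint : IsIntegral O (x : F) := x.2
      obtain ⟨u, v, huv⟩ := half_rep hs hns hgen hxint
      have hxw : (x : F) - algebraMap O F v * w =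
          algebraMap K F ((algebraMap O K (u - v * a)) / 2) := by
        rw [map_div₀, map_ofNat, ← hιK, eq_div_iff h2F]
        simp only [map_sub, map_mul]
        linear_combination huv - (algebraMap O F v) * h2w
      have hxwint : IsIntegral O ((x : F) - algebraMap O F v * w) :=
        hxint.sub (isIntegral_algebraMap.mul hwint)
      rw [hxw] at hxwint
      obtain ⟨d, hd⟩ := int_descend (O := O) hxwint
      refine ⟨d, v, ?_⟩
      have h5 : algebraMap O F d = (x : F) - algebraMap O F v * w := by
        rw [hιK d, hd, ← hxw]
      refine Subtype.ext ?_
      show (x : F) = algebraMap O F d + algebraMap O F v * w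
      linear_combination -h5
    have hw2C : wC * wC = algebraMap O ↥(integralClosure O F) a * wC +
        algebraMap O _ c := Subtype.ext hw2F
    set g : ↥(integralClosure O F) := 2 * wC - algebraMap O _ a with hgdef
    have hgF : (g : F) = 2 * w - algebraMap O F a := rfl
    have hgsq : g * g = algebraMap O ↥(integralClosure O F) (ε : O) := by
      refine Subtype.ext ?_
      show (2 * w - algebraMap O F a) * (2 * w - algebraMap O F a) = algebraMap O F (ε : O)
      linear_combination (2 * w + s - algebraMap O F a) * h2w + hss'
    have hgu : IsUnit g := by
      have hεu : IsUnit (algebraMap O ↥(integralClosure O F) (ε : O)) :=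
        ε.isUnit.map (algebraMap O ↥(integralClosure O F))
      exact isUnit_of_dvd_unit ⟨g, hgsq.symm⟩ hεu
    exact formallyUnramified_of_quadratic_gen wC a c hw2C hgu repC
end

section
/- Let F/K be a ramified quadratic extension of dyadic local fields with relative discriminant Δ_{F/K} = p^{δ_F}, and let ℓ_F = ⌊(δ_F+1)/2⌋. If x ∈ F is an element of valuation 1 (a uniformizer of F), then Tr_{F/K}(x) ∈ p^{ℓ_F}; moreover, if ℓ_F ≤ m (where 2O_K = p^m), then ord_K(Tr_{F/K}(x)) = ℓ_F exactly. -/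
open IntermediateField Polynomial

lemma quad_rel (K : Type*) [Field K] (F : Type*) [Field F] [Algebra K F]
    (hquad : Module.finrank K F = 2) (x : F) (hxr : x ∉ (algebraMap K F).range) :
    x ^ 2 = algebraMap K F (Algebra.trace K F x) * x - algebraMap K F (Algebra.norm K x) := by
  have hfd : FiniteDimensional K F := Module.finite_of_finrank_pos (by omega)
  have hxint : IsIntegral K x := IsIntegral.of_finite K x
  have hdeg : (minpoly K x).natDegree = 2 := by
    have h1 : 2 ≤ (minpoly K x).natDegree := (minpoly.two_le_natDegree_iff hxint).2 hxr
    have h2 : (minpoly K x).natDegree ≤ 2 := hquad ▸ minpoly.natDegree_le x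
    omega
  have htop : K⟮x⟯ = ⊤ := by
    refine IntermediateField.eq_of_le_of_finrank_eq le_top ?_
    rw [adjoin.finrank hxint, hdeg, IntermediateField.finrank_top']
    exact hquad.symm
  let e : K⟮x⟯ ≃ₐ[K] F := (IntermediateField.equivOfEq htop).trans IntermediateField.topEquiv
  let pb : PowerBasis K F := (adjoin.powerBasis hxint).map e
  have hgen : pb.gen = x := by
    simp [pb, e, PowerBasis.map_gen]
  have hdim : pb.dim = 2 := by
    simp [pb, PowerBasis.map_dim, hdeg]
  have htr : Algebra.trace K F x = -(minpoly K x).nextCoeff := by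
    have := pb.trace_gen_eq_nextCoeff_minpoly
    rwa [hgen] at this
  have hnc : (minpoly K x).nextCoeff = (minpoly K x).coeff 1 := by
    rw [Polynomial.nextCoeff_of_natDegree_pos (by omega), hdeg]
  have hnorm : Algebra.norm K x = (minpoly K x).coeff 0 := by
    have := Algebra.PowerBasis.norm_gen_eq_coeff_zero_minpoly pb
    rwa [hgen, hdim, neg_one_sq, one_mul] at this
  have haev : (Polynomial.aeval x) (minpoly K x) = 0 := minpoly.aeval K x
  have hmonic : (minpoly K x).Monic := minpoly.monic hxint
  have hexp : minpoly K x = X ^ 2 + C ((minpoly K x).coeff 1) * X + C ((minpoly K x).coeff 0) := by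
    have h3 : (minpoly K x).coeff 2 = 1 := by
      have := hmonic.leadingCoeff
      rwa [Polynomial.leadingCoeff, hdeg] at this
    ext i
    rcases i with _ | _ | _ | i <;>
      simp [coeff_X, h3, Polynomial.coeff_eq_zero_of_natDegree_lt,
        (by omega : ∀ j : ℕ, (minpoly K x).natDegree < j + 3 ), hdeg]
  rw [hexp] at haev
  simp only [map_add, map_mul, map_pow, aeval_X, aeval_C] at haev
  rw [htr, hnc, hnorm, map_neg]
  ring_nf
  ring_nf at haev
  linear_combination haev

lemma aux_isUnit_sub {R : Type*} [CommRing R] [IsLocalRing R] {u v : R}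
    (hu : IsUnit u) (hv : v ∈ IsLocalRing.maximalIdeal R) : IsUnit (u - v) := by
  by_contra h
  have h1 : u - v ∈ IsLocalRing.maximalIdeal R := h
  have : u ∈ IsLocalRing.maximalIdeal R := by
    have := add_mem h1 hv
    simpa using this
  exact this hu

/-- Let `F/K` be a ramified quadratic extension of dyadic local fields with
relative discriminant `Δ_{F/K} = p^δ` and `ℓ = ⌊(δ+1)/2⌋`.  If `x ∈ F` is a uniformizer of
`F`, then `Tr_{F/K}(x) ∈ p^ℓ`; moreover if `ℓ ≤ m` (where `2O = p^m`) then
`ord_K(Tr_{F/K}(x)) = ℓ` exactly.  The discriminant exponent is expressed through the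
Eisenstein minimal polynomial `z^2 - t z + n` of the uniformizer `x`, whose discriminant
`t^2 - 4n` generates `Δ_{F/K} = p^δ`. -/
theorem trace_of_uniformizer_mem
    (O : Type*) [CommRing O] [IsDomain O] [IsDiscreteValuationRing O]
    (K : Type*) [Field K] [Algebra O K] [IsFractionRing O K] [CharZero K]
    (m : ℕ) (hm1 : 1 ≤ m)
    (hm : Ideal.span {(2 : O)} = (IsLocalRing.maximalIdeal O) ^ m)
    (F : Type*) [Field F] [Algebra K F] [Algebra O F] [IsScalarTower O K F]
    (hquad : Module.finrank K F = 2)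
    [IsDiscreteValuationRing ↥(integralClosure O F)]
    (hram : (IsLocalRing.maximalIdeal O).map (algebraMap O ↥(integralClosure O F)) =
      (IsLocalRing.maximalIdeal ↥(integralClosure O F)) ^ 2)
    (x : ↥(integralClosure O F)) (hx : Irreducible x)
    (t n : O)
    (ht : algebraMap O K t = Algebra.trace K F (x : F))
    (hn : algebraMap O K n = Algebra.norm K (x : F))
    (δ ℓ : ℕ) (hδ : Ideal.span {t ^ 2 - 4 * n} = (IsLocalRing.maximalIdeal O) ^ δ)
    (hℓ : ℓ = (δ + 1) / 2) :
    t ∈ (IsLocalRing.maximalIdeal O) ^ ℓ ∧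
      (ℓ ≤ m → t ∉ (IsLocalRing.maximalIdeal O) ^ (ℓ + 1)) := by
  obtain ⟨π, hπ⟩ := IsDiscreteValuationRing.exists_irreducible O
  have hπ0 : π ≠ 0 := hπ.ne_zero
  have hπu : ¬ IsUnit π := hπ.not_isUnit
  have hπp : Prime π := hπ.prime
  have hspan : IsLocalRing.maximalIdeal O = Ideal.span {π} := hπ.maximalIdeal_eq
  have hmem : ∀ (k : ℕ) (a : O), a ∈ (IsLocalRing.maximalIdeal O) ^ k ↔ π ^ k ∣ a := by
    intro k a
    rw [hspan, Ideal.span_singleton_pow, Ideal.mem_span_singleton]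
  have hassoc : ∀ {a : O} {k : ℕ}, Ideal.span {a} = (IsLocalRing.maximalIdeal O) ^ k →
      Associated a (π ^ k) := by
    intro a k h
    rw [hspan, Ideal.span_singleton_pow, Ideal.span_singleton_eq_span_singleton] at h
    exact h
  have h2a : Associated (2 : O) (π ^ m) := hassoc hm
  have hd : Associated (t ^ 2 - 4 * n) (π ^ δ) := hassoc hδ
  -- determination of δ from an associated power
  have hδeq : ∀ k : ℕ, Associated (t ^ 2 - 4 * n) (π ^ k) → δ = k := by
    intro k hk
    have h := hd.symm.trans hk
    have h1 := (pow_dvd_pow_iff hπ0 hπu).mp h.dvd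
    have h2 := (pow_dvd_pow_iff hπ0 hπu).mp h.symm.dvd
    omega
  -- facts in the upstairs ring
  have hxspan : IsLocalRing.maximalIdeal ↥(integralClosure O F) = Ideal.span {x} :=
    hx.maximalIdeal_eq
  have hAx : Associated (algebraMap O ↥(integralClosure O F) π) (x ^ 2) := by
    have h := hram
    rw [hspan, hxspan, Ideal.map_span, Set.image_singleton, Ideal.span_singleton_pow,
      Ideal.span_singleton_eq_span_singleton] at h
    exact h
  have hinjKF : Function.Injective (algebraMap K F) := (algebraMap K F).injective
  have hinjOF : Function.Injective (algebraMap O F) := by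
    rw [IsScalarTower.algebraMap_eq O K F]
    exact hinjKF.comp (IsFractionRing.injective O K)
  have hcoe : ∀ a : O, ((algebraMap O ↥(integralClosure O F) a : ↥(integralClosure O F)) : F)
      = algebraMap O F a := by
    intro a
    rw [IsScalarTower.algebraMap_apply O ↥(integralClosure O F) F]
    rfl
  have hinjO : Function.Injective (algebraMap O ↥(integralClosure O F)) := by
    intro a b hab
    apply hinjOF
    rw [← hcoe, ← hcoe, hab]
  -- x not in the image of K
  have hxr : (x : F) ∉ (algebraMap K F).range := by
    rintro ⟨k, hk⟩
    have hkin : IsIntegral O k := by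
      have hxi : IsIntegral O (x : F) := x.2
      rw [← hk] at hxi
      exact (isIntegral_algebraMap_iff hinjKF).mp hxi
    obtain ⟨o, ho⟩ := IsIntegrallyClosed.isIntegral_iff.mp hkin
    have hxo : x = algebraMap O ↥(integralClosure O F) o := by
      apply Subtype.ext
      rw [hcoe, IsScalarTower.algebraMap_apply O K F, ho, hk]
    by_cases hu : IsUnit o
    · exact hx.not_isUnit (hxo ▸ hu.map (algebraMap O ↥(integralClosure O F)))
    · have hmemo : o ∈ IsLocalRing.maximalIdeal O := (IsLocalRing.mem_maximalIdeal o).mpr hu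
      have hdvd : π ∣ o := by rwa [hspan, Ideal.mem_span_singleton] at hmemo
      obtain ⟨c, hc⟩ := hdvd
      have : x ^ 2 ∣ x := by
        refine dvd_trans (hAx.symm.dvd) ?_
        rw [hxo, hc, map_mul]
        exact Dvd.intro _ rfl
      have hxne : x ≠ 0 := hx.ne_zero
      have := (pow_dvd_pow_iff hxne hx.not_isUnit).mp
        (by simpa using this : x ^ 2 ∣ x ^ 1)
      omega
  -- the quadratic relation, upstairs
  have hrel : x ^ 2 = algebraMap O ↥(integralClosure O F) t * x
      - algebraMap O ↥(integralClosure O F) n := by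
    apply Subtype.ext
    push_cast
    rw [IsScalarTower.algebraMap_apply O K F, IsScalarTower.algebraMap_apply O K F, ht, hn]
    exact quad_rel K F hquad (x : F) hxr
  by_cases hπt : π ∣ t
  · -- π divides the trace
    -- Step 1: n is associated to π
    have hx2T : x ^ 2 ∣ algebraMap O ↥(integralClosure O F) t := by
      obtain ⟨t', htc⟩ := hπt
      rw [htc, map_mul]
      exact Dvd.dvd.mul_right hAx.symm.dvd _
    obtain ⟨c, hcc⟩ := hx2T
    have hxc : x * c ∈ IsLocalRing.maximalIdeal ↥(integralClosure O F) := by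
      rw [hxspan, Ideal.mem_span_singleton]
      exact dvd_mul_right x c
    have hunit : IsUnit (x * c - 1) := by
      have h1 : IsUnit ((1 : ↥(integralClosure O F)) - x * c) := aux_isUnit_sub isUnit_one hxc
      have := h1.neg
      rwa [neg_sub] at this
    have hNeq : algebraMap O ↥(integralClosure O F) n = x ^ 2 * (x * c - 1) := by
      have h := hrel
      rw [hcc] at h
      linear_combination h
    have hNassoc : Associated ((x : ↥(integralClosure O F)) ^ 2)
        (algebraMap O ↥(integralClosure O F) n) :=
      ⟨hunit.unit, by rw [hunit.unit_spec, ← hNeq]⟩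
    have hNpi : Associated (algebraMap O ↥(integralClosure O F) n)
        (algebraMap O ↥(integralClosure O F) π) := hNassoc.symm.trans hAx.symm
    have hn0 : n ≠ 0 := by
      intro h0
      rw [h0, map_zero] at hNpi
      have hπ0' : algebraMap O ↥(integralClosure O F) π = 0 :=
        ((associated_zero_iff_eq_zero _).mp hNpi.symm)
      exact hπ0 (hinjO (by rw [hπ0', map_zero]))
    obtain ⟨a, u, hnu⟩ := IsDiscreteValuationRing.eq_unit_mul_pow_irreducible hn0 hπ
    have ha1 : a = 1 := by
      have h1 : Associated (π ^ a) n := ⟨u, by rw [mul_comm, hnu]⟩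
      have h2 : Associated ((algebraMap O ↥(integralClosure O F) π) ^ a)
          (algebraMap O ↥(integralClosure O F) n) := by
        have := h1.map (algebraMap O ↥(integralClosure O F)).toMonoidHom
        simpa using this
      have h3 : Associated ((x : ↥(integralClosure O F)) ^ (2 * a))
          ((x : ↥(integralClosure O F)) ^ 2) := by
        have h4 := (hAx.pow_pow (n := a)).symm.trans (h2.trans (hNpi.trans hAx))
        rwa [← pow_mul] at h4
      have hxne : (x : ↥(integralClosure O F)) ≠ 0 := hx.ne_zero
      have h5 := (pow_dvd_pow_iff hxne hx.not_isUnit).mp h3.dvd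
      have h6 := (pow_dvd_pow_iff hxne hx.not_isUnit).mp h3.symm.dvd
      omega
    have hnπ : Associated n π := by
      rw [ha1, pow_one] at hnu
      exact ⟨u⁻¹, by rw [hnu]; simp [mul_comm]⟩
    -- Step 2: 4n is associated to π^(2m+1)
    have h4n : Associated (4 * n) (π ^ (2 * m + 1)) := by
      have h := h2a.mul_mul (h2a.mul_mul hnπ)
      have e1 : (2 : O) * (2 * n) = 4 * n := by ring
      have e2 : π ^ m * (π ^ m * π) = π ^ (2 * m + 1) := by ring
      rwa [e1, e2] at h
    by_cases ht0 : t = 0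
    · have hδ1 : δ = 2 * m + 1 := by
        apply hδeq
        have hneg : Associated (-(4 * n)) (4 * n) := ⟨-1, by simp⟩
        have : t ^ 2 - 4 * n = -(4 * n) := by rw [ht0]; ring
        rw [this]
        exact hneg.trans h4n
      constructor
      · rw [ht0]; exact zero_mem _
      · intro hle
        exfalso; omega
    · obtain ⟨a2, u2, htu⟩ := IsDiscreteValuationRing.eq_unit_mul_pow_irreducible ht0 hπ
      have ha2 : 1 ≤ a2 := by
        by_contra h
        have : a2 = 0 := by omega
        rw [this, pow_zero, mul_one] at htu
        exact hπu (isUnit_of_dvd_unit hπt (htu ▸ u2.isUnit))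
      obtain ⟨w, hw⟩ := h4n.symm
      rcases le_or_gt a2 m with ham | ham
      · -- δ = 2 * a2, ℓ = a2
        have hbr : IsUnit ((u2 : O) ^ 2 - (w : O) * π ^ (2 * m + 1 - 2 * a2)) := by
          apply aux_isUnit_sub (u2.isUnit.pow 2)
          rw [hspan, Ideal.mem_span_singleton]
          exact Dvd.dvd.mul_left (dvd_pow_self π (by omega)) _
        have hkey : t ^ 2 - 4 * n =
            π ^ (2 * a2) * ((u2 : O) ^ 2 - (w : O) * π ^ (2 * m + 1 - 2 * a2)) := by
          obtain ⟨e, he⟩ : ∃ e, 2 * m + 1 - 2 * a2 = e := ⟨_, rfl⟩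
          rw [he]
          have hexp : 2 * m + 1 = e + 2 * a2 := by omega
          rw [htu, ← hw, hexp, pow_add]
          ring
        have hδ2 : δ = 2 * a2 := by
          apply hδeq
          exact Associated.symm ⟨hbr.unit, by rw [hbr.unit_spec]; exact hkey.symm⟩
        have hℓ2 : ℓ = a2 := by omega
        constructor
        · rw [hmem, hℓ2, htu]
          exact dvd_mul_left _ _
        · intro _
          rw [hmem]
          intro hdv
          rw [htu, Units.dvd_mul_left] at hdv
          have := (pow_dvd_pow_iff hπ0 hπu).mp hdv
          omega
      · -- δ = 2 * m + 1, ℓ = m + 1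
        have hbr : IsUnit ((u2 : O) ^ 2 * π ^ (2 * a2 - (2 * m + 1)) - (w : O)) := by
          have h1 : IsUnit ((w : O) - (u2 : O) ^ 2 * π ^ (2 * a2 - (2 * m + 1))) := by
            apply aux_isUnit_sub w.isUnit
            rw [hspan, Ideal.mem_span_singleton]
            exact Dvd.dvd.mul_left (dvd_pow_self π (by omega)) _
          have := h1.neg
          rwa [neg_sub] at this
        have hkey : t ^ 2 - 4 * n =
            π ^ (2 * m + 1) * ((u2 : O) ^ 2 * π ^ (2 * a2 - (2 * m + 1)) - (w : O)) := by
          obtain ⟨e, he⟩ : ∃ e, 2 * a2 - (2 * m + 1) = e := ⟨_, rfl⟩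
          rw [he]
          have hexp : 2 * a2 = e + (2 * m + 1) := by omega
          rw [htu, ← hw, mul_pow, ← pow_mul, mul_comm a2 2, hexp, pow_add]
          ring
        have hδ2 : δ = 2 * m + 1 := by
          apply hδeq
          exact Associated.symm ⟨hbr.unit, by rw [hbr.unit_spec]; exact hkey.symm⟩
        have hℓ2 : ℓ = m + 1 := by omega
        constructor
        · rw [hmem, hℓ2, htu]
          exact Dvd.dvd.mul_left (pow_dvd_pow π (by omega)) _
        · intro hle
          exfalso; omega
  · -- π does not divide the trace : δ = 0
    have hδ0 : δ = 0 := by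
      by_contra h
      have hdvd : π ∣ t ^ 2 - 4 * n :=
        (dvd_pow_self π (by omega : δ ≠ 0)).trans hd.symm.dvd
      have h2 : π ∣ 2 := (dvd_pow_self π (by omega : m ≠ 0)).trans h2a.symm.dvd
      have h4n : π ∣ 4 * n := by
        have h4 : (4 : O) * n = 2 * (2 * n) := by ring
        rw [h4]
        exact h2.mul_right _
      have ht2 : π ∣ t ^ 2 := by
        have := dvd_add hdvd h4n
        simpa using this
      exact hπt (hπp.dvd_of_dvd_pow ht2)
    have hℓ0 : ℓ = 0 := by omega
    constructor
    · rw [hℓ0, pow_zero, Ideal.one_eq_top]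
      exact Submodule.mem_top
    · intro _
      rw [hℓ0, zero_add, hmem, pow_one]
      exact hπt
end

section
/- Let k_2/K be a ramified quadratic extension of dyadic local fields and let a_2 be the constant term of an Eisenstein polynomial over K. Suppose i ≥ 1 and η, η' ∈ O_{k_2} satisfy N_{k_2/K}(η) ≡ N_{k_2/K}(η') ≡ a_2 (mod p^{i+1}). Then there exist e, f ∈ O_K such that η' = eπ + (1 + fπ)η, where π is a uniformizer of K. -/
set_option synthInstance.maxHeartbeats 1000000
set_option maxHeartbeats 1000000

private lemma matrix_quad {R : Type*} [CommRing R] (M : Matrix (Fin 2) (Fin 2) R) :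
    M * M - M.trace • M + M.det • 1 = 0 := by
  ext i j
  fin_cases i <;> fin_cases j <;>
    simp [Matrix.mul_apply, Fin.sum_univ_two, Matrix.trace, Matrix.det_fin_two,
      Matrix.one_apply, Matrix.diag] <;> ring

private lemma quad_identity {K L : Type*} [Field K] [CommRing L] [Nontrivial L] [Algebra K L]
    (h : Module.finrank K L = 2) (x : L) :
    x * x - algebraMap K L (Algebra.trace K L x) * x + algebraMap K L (Algebra.norm K x) = 0 := by
  have : FiniteDimensional K L := Module.finite_of_finrank_pos (by omega)
  let b : Module.Basis (Fin 2) K L := Module.finBasisOfFinrankEq K L h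
  apply Algebra.leftMulMatrix_injective b
  have hM := matrix_quad (Algebra.leftMulMatrix b x)
  rw [Algebra.trace_eq_matrix_trace b x, Algebra.norm_eq_matrix_det b x]
  simp only [map_add, map_sub, map_mul, map_zero, AlgHom.commutes,
    Algebra.algebraMap_eq_smul_one, smul_mul_assoc, one_mul, map_smul, map_one]
  exact hM


/-- Let `k₂/K` be a ramified quadratic extension of dyadic local fields
and let `a₂` be the constant term of an Eisenstein polynomial over `K`.  Suppose `i ≥ 1`
and `η, η' ∈ O_{k₂}` satisfy `N(η) ≡ N(η') ≡ a₂ (mod p^{i+1})`.  Then there exist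
`e, f ∈ O_K` with `η' = eπ + (1 + fπ)η`, where `π` is a uniformizer of `K`. -/
theorem norm_congruent_uniformizers_related
    (O : Type*) [CommRing O] [IsDomain O] [IsDiscreteValuationRing O]
    (K : Type*) [Field K] [Algebra O K] [IsFractionRing O K] [CharZero K]
    (m : ℕ) (hm1 : 1 ≤ m)
    (hm : Ideal.span {(2 : O)} = (IsLocalRing.maximalIdeal O) ^ m)
    (p : Ideal O) (hp : p = IsLocalRing.maximalIdeal O)
    (O₂ : Type*) [CommRing O₂] [IsDomain O₂] [IsDiscreteValuationRing O₂]
    (k₂ : Type*) [Field k₂] [Algebra O₂ k₂] [IsFractionRing O₂ k₂]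
    [Algebra O O₂] [Algebra K k₂] [Algebra O k₂]
    [IsScalarTower O K k₂] [IsScalarTower O O₂ k₂]
    (hquad₂ : Module.finrank K k₂ = 2)
    (hram₂ : (IsLocalRing.maximalIdeal O).map (algebraMap O O₂) =
      (IsLocalRing.maximalIdeal O₂) ^ 2)
    (T N : O₂ → O)
    (hT : ∀ η : O₂, algebraMap O K (T η) = Algebra.trace K k₂ (algebraMap O₂ k₂ η))
    (hN : ∀ η : O₂, algebraMap O K (N η) = Algebra.norm K (algebraMap O₂ k₂ η))
    (a₂ : O) (ha₂ : a₂ ∈ p) (ha₂' : a₂ ∉ p ^ 2)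
    (π : O) (hπ : Irreducible π)
    (i : ℕ) (hi : 1 ≤ i)
    (η η' : O₂)
    (hη : N η - a₂ ∈ p ^ (i + 1)) (hη' : N η' - a₂ ∈ p ^ (i + 1))
    :
    ∃ e f : O, η' = algebraMap O O₂ (e * π) + algebraMap O O₂ (1 + f * π) * η := by
  subst hp
  have hFD : FiniteDimensional K k₂ := Module.finite_of_finrank_pos (by omega)
  have htower : ∀ r : O, algebraMap O₂ k₂ (algebraMap O O₂ r)
      = algebraMap K k₂ (algebraMap O K r) := by
    intro r
    rw [← IsScalarTower.algebraMap_apply, IsScalarTower.algebraMap_apply O K k₂]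
  have hι_inj : Function.Injective (algebraMap O₂ k₂) := IsFractionRing.injective O₂ k₂
  have hφ_inj : Function.Injective (algebraMap O K) := IsFractionRing.injective O K
  have hψ_inj : Function.Injective (algebraMap K k₂) := (algebraMap K k₂).injective
  have hP_inj : Function.Injective (algebraMap O O₂) := by
    intro x y hxy
    apply hφ_inj; apply hψ_inj
    rw [← htower, ← htower, hxy]
  have hπp : Prime π := hπ.prime
  obtain ⟨ρ, hρ⟩ := IsDiscreteValuationRing.exists_irreducible O₂
  have hρp : Prime ρ := hρ.prime
  have hmax : IsLocalRing.maximalIdeal O = Ideal.span {π} :=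
    (IsDiscreteValuationRing.irreducible_iff_uniformizer π).mp hπ
  have hmax₂ : IsLocalRing.maximalIdeal O₂ = Ideal.span {ρ} :=
    (IsDiscreteValuationRing.irreducible_iff_uniformizer ρ).mp hρ
  -- the associated relation between π and ρ²
  have hassoc : Associated (algebraMap O O₂ π) (ρ * ρ) := by
    rw [hmax, hmax₂] at hram₂
    rw [← Ideal.span_singleton_eq_span_singleton, ← sq, ← Ideal.span_singleton_pow]
    rw [← hram₂, Ideal.map_span, Set.image_singleton]
  obtain ⟨u, hu⟩ := hassoc
  have hπρ : (ρ * ρ) ∣ algebraMap O O₂ π :=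
    ⟨↑u⁻¹, by rw [← hu, mul_assoc, Units.mul_inv, mul_one]⟩
  have hdvd2 : ∀ x : O₂, (ρ * ρ) ∣ x → algebraMap O O₂ π ∣ x := by
    rintro x ⟨c, rfl⟩
    exact ⟨↑u * c, by rw [← mul_assoc, hu]⟩
  have hNπ2 : ∀ x : O₂, algebraMap O O₂ π ∣ x → π ^ 2 ∣ N x := by
    rintro x ⟨γ, rfl⟩
    refine ⟨N γ, hφ_inj ?_⟩
    rw [hN, map_mul, htower, map_mul, Algebra.norm_algebraMap, hquad₂, map_mul, map_pow, hN]
  have hρ_unit_dvd : ∀ r : O, ρ ∣ algebraMap O O₂ r → π ∣ r := by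
    intro r hr
    by_contra hcon
    have hru : IsUnit r := by
      by_contra hru
      exact hcon (Ideal.mem_span_singleton.mp (hmax ▸ IsLocalRing.mem_maximalIdeal r |>.mpr hru))
    exact hρ.not_isUnit (isUnit_of_dvd_unit hr (hru.map (algebraMap O O₂)))
  have quadO₂ : ∀ x : O₂, algebraMap O O₂ (N x)
      = algebraMap O O₂ (T x) * x - x * x := by
    intro x
    apply hι_inj
    have h := quad_identity hquad₂ (algebraMap O₂ k₂ x)
    rw [← hT, ← hN] at h
    simp only [map_sub, map_mul, htower]
    linear_combination h
  -- membership / divisibility dictionary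
  have hple : (IsLocalRing.maximalIdeal O) ^ (i+1) ≤ (IsLocalRing.maximalIdeal O) ^ 2 :=
    Ideal.pow_le_pow_right (by omega)
  have hmem1 : ∀ x : O, x ∈ IsLocalRing.maximalIdeal O ↔ π ∣ x := by
    intro x; rw [hmax, Ideal.mem_span_singleton]
  have hmem2 : ∀ x : O, x ∈ (IsLocalRing.maximalIdeal O) ^ 2 ↔ π ^ 2 ∣ x := by
    intro x; rw [hmax, Ideal.span_singleton_pow, Ideal.mem_span_singleton]
  have hval : ∀ θ : O₂, N θ - a₂ ∈ (IsLocalRing.maximalIdeal O) ^ (i+1) →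
      π ∣ N θ ∧ ¬ π ^ 2 ∣ N θ := by
    intro θ hθ
    constructor
    · rw [← hmem1]
      have : N θ = a₂ + (N θ - a₂) := by ring
      rw [this]
      exact add_mem ha₂ (Ideal.pow_le_self (by omega) (hple hθ))
    · intro hc
      apply ha₂'
      have : a₂ = N θ - (N θ - a₂) := by ring
      rw [this]
      exact sub_mem ((hmem2 _).mpr hc) (hple hθ)
  obtain ⟨hnπ, hnπ2⟩ := hval η hη
  obtain ⟨hnπ', hnπ2'⟩ := hval η' hη'
  -- order computation : θ is exactly divisible by ρ once
  have ordLemma : ∀ θ : O₂, π ∣ N θ → ¬ π ^ 2 ∣ N θ → ρ ∣ θ ∧ ¬ (ρ * ρ) ∣ θ := by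
    intro θ h1 h2
    have hrel : algebraMap O O₂ (N θ) = θ * (algebraMap O O₂ (T θ) - θ) := by
      rw [quadO₂ θ]; ring
    have hρρN : (ρ * ρ) ∣ algebraMap O O₂ (N θ) := by
      obtain ⟨w, hw⟩ := h1
      rw [hw, map_mul]
      exact Dvd.dvd.mul_right hπρ _
    have hnotρρ : ¬ (ρ * ρ) ∣ θ := fun hc => h2 (hNπ2 θ (hdvd2 θ hc))
    refine ⟨?_, hnotρρ⟩
    by_contra hρθ
    have hρ0 : ρ ≠ 0 := hρ.ne_zero
    have hsplit : (ρ * ρ) ∣ (algebraMap O O₂ (T θ) - θ) := by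
      have h3 : ρ ∣ θ * (algebraMap O O₂ (T θ) - θ) :=
        dvd_trans (dvd_mul_right ρ ρ) (hrel ▸ hρρN)
      have h4 : ρ ∣ (algebraMap O O₂ (T θ) - θ) := (hρp.2.2 _ _ h3).resolve_left hρθ
      obtain ⟨c, hc⟩ := h4
      obtain ⟨d, hd⟩ := hρρN
      have h5 : θ * c = ρ * d := by
        apply mul_left_cancel₀ hρ0
        have := hrel.symm.trans hd
        rw [hc] at this
        linear_combination this
      have h6 : ρ ∣ c := (hρp.2.2 _ _ (h5 ▸ dvd_mul_right ρ d)).resolve_left hρθ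
      obtain ⟨e, he⟩ := h6
      exact ⟨e, by rw [hc, he]; ring⟩
    -- the element δ := T θ - θ has the same norm as θ, but is divisible by π
    have hπδ : algebraMap O O₂ π ∣ (algebraMap O O₂ (T θ) - θ) := hdvd2 _ hsplit
    have hNδ : N (algebraMap O O₂ (T θ) - θ) = N θ := by
      apply hφ_inj; apply hψ_inj
      have hq1 := quad_identity hquad₂ (algebraMap O₂ k₂ θ)
      rw [← hT, ← hN] at hq1
      have hq2 := quad_identity hquad₂ (algebraMap O₂ k₂ (algebraMap O O₂ (T θ) - θ))
      rw [← hN] at hq2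
      have htr : Algebra.trace K k₂ (algebraMap O₂ k₂ (algebraMap O O₂ (T θ) - θ))
          = algebraMap O K (T θ) := by
        rw [map_sub, map_sub, htower, Algebra.trace_algebraMap, hquad₂, ← hT]
        ring
      rw [htr, map_sub, htower] at hq2
      linear_combination hq2 - hq1
    exact h2 (hNδ ▸ hNπ2 _ hπδ)
  obtain ⟨hρη, hρρη⟩ := ordLemma η hnπ hnπ2
  obtain ⟨hρη', hρρη'⟩ := ordLemma η' hnπ' hnπ2'
  -- the trace of η is divisible by π
  have hTπ : π ∣ T η := by
    apply hρ_unit_dvd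
    have hrel : algebraMap O O₂ (N η) = η * (algebraMap O O₂ (T η) - η) := by
      rw [quadO₂ η]; ring
    have hρρN : (ρ * ρ) ∣ algebraMap O O₂ (N η) := by
      obtain ⟨w, hw⟩ := hnπ
      rw [hw, map_mul]
      exact Dvd.dvd.mul_right hπρ _
    have hd1 : ρ ∣ (algebraMap O O₂ (T η) - η) := by
      by_contra hcon
      obtain ⟨η₁, hη₁⟩ := hρη
      have hnρη₁ : ¬ ρ ∣ η₁ := fun ⟨c, hc⟩ => hρρη ⟨c, by rw [hη₁, hc]; ring⟩
      obtain ⟨d, hd⟩ := hρρN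
      have h5 : η₁ * (algebraMap O O₂ (T η) - η) = ρ * d := by
        apply mul_left_cancel₀ hρ.ne_zero
        rw [← mul_assoc, ← hη₁]
        linear_combination hrel.symm.trans hd
      rcases hρp.2.2 _ _ (h5 ▸ dvd_mul_right ρ d) with h | h
      · exact hnρη₁ h
      · exact hcon h
    have : algebraMap O O₂ (T η) = (algebraMap O O₂ (T η) - η) + η := by ring
    rw [this]
    exact dvd_add hd1 hρη
  -- η is not in the image of K
  have hη_not_range : ∀ c : K, algebraMap K k₂ c ≠ algebraMap O₂ k₂ η := by
    intro c hc
    have h1 : algebraMap O K (T η) = 2 * c := by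
      rw [hT, ← hc, Algebra.trace_algebraMap, hquad₂, two_smul, two_mul]
    have h2 : algebraMap O K (N η) = c ^ 2 := by
      rw [hN, ← hc, Algebra.norm_algebraMap, hquad₂]
    have h3 : (T η) ^ 2 = 4 * N η := by
      apply hφ_inj
      rw [map_pow, h1, map_mul, h2, map_ofNat]
      ring
    have h4ne : (4 : O) ≠ 0 := by
      intro h4
      have := congrArg (algebraMap O K) h4
      rw [map_ofNat, map_zero] at this
      norm_num at this
    have hn0 : N η ≠ 0 := fun h => hnπ2 (h ▸ dvd_zero _)
    have ht0 : T η ≠ 0 := by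
      intro h
      rw [h] at h3
      have : (4 : O) * N η = 0 := by linear_combination -h3
      rcases mul_eq_zero.mp this with h | h
      · exact h4ne h
      · exact hn0 h
    have h20 : (2 : O) ≠ 0 := by
      intro h2'
      have := congrArg (algebraMap O K) h2'
      rw [map_ofNat, map_zero] at this
      norm_num at this
    obtain ⟨α, ut, hut⟩ := IsDiscreteValuationRing.eq_unit_mul_pow_irreducible ht0 hπ
    obtain ⟨γ, u2, hu2⟩ := IsDiscreteValuationRing.eq_unit_mul_pow_irreducible h20 hπ
    obtain ⟨w, hw⟩ := hnπ
    have hwu : IsUnit w := by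
      by_contra hwu
      apply hnπ2
      have : π ∣ w := Ideal.mem_span_singleton.mp
        (hmax ▸ IsLocalRing.mem_maximalIdeal w |>.mpr hwu)
      obtain ⟨w2, hw2⟩ := this
      exact ⟨w2, by rw [hw, hw2]; ring⟩
    obtain ⟨uw, huw⟩ := hwu
    have key : (↑(ut * ut) : O) * π ^ (α + α) = ↑(u2 * u2 * uw) * π ^ (γ + γ + 1) := by
      have h4 : (4 : O) = 2 * 2 := by norm_num
      rw [hut, hw, h4, hu2, ← huw] at h3
      simp only [Units.val_mul, pow_add, pow_one]
      linear_combination h3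
    have := IsDiscreteValuationRing.unit_mul_pow_congr_pow hπ hπ _ _ _ _ key
    omega
  -- coefficients against the "basis" {1, η} are unique
  have hcoeff : ∀ α β : K,
      algebraMap K k₂ α + algebraMap K k₂ β * algebraMap O₂ k₂ η = 0 → α = 0 ∧ β = 0 := by
    intro α β h
    by_cases hβ : β = 0
    · subst hβ
      rw [map_zero, zero_mul, add_zero] at h
      exact ⟨hψ_inj (by rw [h, map_zero]), rfl⟩
    · exfalso
      apply hη_not_range (-α / β)
      rw [map_div₀, map_neg]
      have hβ0 : algebraMap K k₂ β ≠ 0 := fun hc => hβ (hψ_inj (by rw [hc, map_zero]))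
      field_simp
      linear_combination -h
  -- {η, 1} is a basis of k₂ over K : write η' in coordinates
  have hind : LinearIndependent K ![algebraMap O₂ k₂ η, (1 : k₂)] := by
    rw [linearIndependent_fin2]
    refine ⟨by simp, fun a hc => ?_⟩
    apply hη_not_range a
    simpa [Algebra.algebraMap_eq_smul_one] using hc
  have hcard : Fintype.card (Fin 2) = Module.finrank K k₂ := by simp [hquad₂]
  set B := basisOfLinearIndependentOfCardEqFinrank hind hcard with hB
  have hBcoe : ∀ j : Fin 2, B j = ![algebraMap O₂ k₂ η, (1 : k₂)] j := fun j => by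
    rw [hB, coe_basisOfLinearIndependentOfCardEqFinrank]
  have hrepr : algebraMap O₂ k₂ η'
      = algebraMap K k₂ (B.repr (algebraMap O₂ k₂ η') 1)
        + algebraMap K k₂ (B.repr (algebraMap O₂ k₂ η') 0) * algebraMap O₂ k₂ η := by
    have h := B.sum_repr (algebraMap O₂ k₂ η')
    rw [Fin.sum_univ_two, hBcoe 0, hBcoe 1] at h
    simp only [Matrix.cons_val_zero, Matrix.cons_val_one, Matrix.head_cons] at h
    rw [Algebra.smul_def, Algebra.smul_def, mul_one] at h
    linear_combination h.symm
  obtain ⟨g₁, s₁, hs₁, hg₁⟩ := IsFractionRing.div_surjective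
    (A := O) (B.repr (algebraMap O₂ k₂ η') 1)
  obtain ⟨g₂, s₂, hs₂, hg₂⟩ := IsFractionRing.div_surjective
    (A := O) (B.repr (algebraMap O₂ k₂ η') 0)
  have hs₁0 : algebraMap O K s₁ ≠ 0 :=
    IsFractionRing.to_map_ne_zero_of_mem_nonZeroDivisors hs₁
  have hs₂0 : algebraMap O K s₂ ≠ 0 :=
    IsFractionRing.to_map_ne_zero_of_mem_nonZeroDivisors hs₂
  have key : algebraMap O O₂ (s₁ * s₂) * η'
      = algebraMap O O₂ (g₁ * s₂) + algebraMap O O₂ (g₂ * s₁) * η := by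
    apply hι_inj
    have hψs₁ : algebraMap K k₂ (algebraMap O K s₁) ≠ 0 :=
      fun hc => hs₁0 (hψ_inj (by rw [hc, map_zero]))
    have hψs₂ : algebraMap K k₂ (algebraMap O K s₂) ≠ 0 :=
      fun hc => hs₂0 (hψ_inj (by rw [hc, map_zero]))
    simp only [map_mul, map_add, htower]
    rw [hrepr, ← hg₁, ← hg₂]
    rw [map_div₀, map_div₀]
    field_simp
  have hs0 : s₁ * s₂ ≠ 0 :=
    mul_ne_zero (fun h => hs₁0 (by rw [h, map_zero])) (fun h => hs₂0 (by rw [h, map_zero]))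
  obtain ⟨k, us, hus⟩ := IsDiscreteValuationRing.eq_unit_mul_pow_irreducible hs0 hπ
  have key2 : algebraMap O O₂ (π ^ k) * η'
      = algebraMap O O₂ (↑us⁻¹ * (g₁ * s₂)) + algebraMap O O₂ (↑us⁻¹ * (g₂ * s₁)) * η := by
    have hP1 : (↑us⁻¹ : O) * (s₁ * s₂) = π ^ k := by
      rw [hus, ← mul_assoc, Units.inv_mul, one_mul]
    calc algebraMap O O₂ (π ^ k) * η'
        = algebraMap O O₂ (↑us⁻¹ : O) * (algebraMap O O₂ (s₁ * s₂) * η') := by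
          rw [← mul_assoc, ← map_mul, hP1]
      _ = algebraMap O O₂ (↑us⁻¹ : O) * (algebraMap O O₂ (g₁ * s₂)
            + algebraMap O O₂ (g₂ * s₁) * η) := by rw [key]
      _ = _ := by simp only [map_mul]; ring
  -- denominator-clearing induction
  have main : ∀ k : ℕ, ∀ g h : O, algebraMap O O₂ (π ^ k) * η'
      = algebraMap O O₂ g + algebraMap O O₂ h * η →
      ∃ a b : O, η' = algebraMap O O₂ a + algebraMap O O₂ b * η := by
    intro k
    induction k with
    | zero => exact fun g h hgh => ⟨g, h, by simpa using hgh⟩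
    | succ k ih =>
      intro g h hgh
      have hρπ : ρ ∣ algebraMap O O₂ (π ^ (k+1)) := by
        refine dvd_trans (dvd_trans ?_ hπρ) (map_dvd _ (dvd_pow_self π (Nat.succ_ne_zero k)))
        exact dvd_mul_right ρ ρ
      have hρg : ρ ∣ algebraMap O O₂ g := by
        have hgeq : algebraMap O O₂ g = algebraMap O O₂ (π ^ (k+1)) * η' - algebraMap O O₂ h * η := by
          linear_combination hgh.symm
        rw [hgeq]
        exact dvd_sub (hρπ.mul_right _) (hρη.mul_left _)
      obtain ⟨g₁', hg₁'⟩ := hρ_unit_dvd g hρg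
      have hρρπ : (ρ * ρ) ∣ algebraMap O O₂ (π ^ (k+1)) :=
        dvd_trans hπρ (map_dvd _ (dvd_pow_self π (Nat.succ_ne_zero k)))
      have hρρh : (ρ * ρ) ∣ algebraMap O O₂ h * η := by
        have heq : algebraMap O O₂ h * η
            = algebraMap O O₂ (π ^ (k+1)) * η' - algebraMap O O₂ π * algebraMap O O₂ g₁' := by
          rw [← map_mul, ← hg₁']
          linear_combination hgh.symm
        rw [heq]
        exact dvd_sub (hρρπ.mul_right _) (hπρ.mul_right _)
      have hπh : π ∣ h := by
        by_contra hcon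
        have hhu : IsUnit h := by
          by_contra hhu
          exact hcon (Ideal.mem_span_singleton.mp
            (hmax ▸ IsLocalRing.mem_maximalIdeal h |>.mpr hhu))
        obtain ⟨v, hv⟩ := hhu.map (algebraMap O O₂)
        apply hρρη
        obtain ⟨c, hc⟩ := hρρh
        refine ⟨↑v⁻¹ * c, ?_⟩
        have : (↑v : O₂) * η = ρ * ρ * c := by rw [hv]; exact hc
        calc η = ↑v⁻¹ * (↑v * η) := by rw [← mul_assoc, Units.inv_mul, one_mul]
          _ = ρ * ρ * (↑v⁻¹ * c) := by rw [this]; ring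
      obtain ⟨h₁', hh₁'⟩ := hπh
      apply ih g₁' h₁'
      have hπ0 : algebraMap O O₂ π ≠ 0 := fun hz => hπ.ne_zero (hP_inj (by rw [hz, map_zero]))
      apply mul_left_cancel₀ hπ0
      have e1 : algebraMap O O₂ g = algebraMap O O₂ π * algebraMap O O₂ g₁' := by
        rw [← map_mul, ← hg₁']
      have e2 : algebraMap O O₂ h = algebraMap O O₂ π * algebraMap O O₂ h₁' := by
        rw [← map_mul, ← hh₁']
      calc algebraMap O O₂ π * (algebraMap O O₂ (π ^ k) * η')
          = algebraMap O O₂ (π ^ (k+1)) * η' := by rw [← mul_assoc, ← map_mul, ← pow_succ']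
        _ = algebraMap O O₂ g + algebraMap O O₂ h * η := hgh
        _ = algebraMap O O₂ π * (algebraMap O O₂ g₁' + algebraMap O O₂ h₁' * η) := by
            rw [e1, e2]; ring
  obtain ⟨a, b, hab⟩ := main k _ _ key2
  -- a is divisible by π, b is not
  have hπa : π ∣ a := by
    apply hρ_unit_dvd
    have : algebraMap O O₂ a = η' - algebraMap O O₂ b * η := by linear_combination hab.symm
    rw [this]
    exact dvd_sub hρη' (hρη.mul_left _)
  have hπb : ¬ π ∣ b := by
    intro hc
    apply hρρη'
    obtain ⟨a₁, ha₁⟩ := hπa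
    obtain ⟨b₁, hb₁⟩ := hc
    rw [hab, ha₁, hb₁, map_mul, map_mul]
    exact dvd_add (hπρ.mul_right _) ((hπρ.mul_right _).mul_right _)
  have hb0 : b ≠ 0 := fun hc => hπb (hc ▸ dvd_zero π)
  have hφb0 : algebraMap O K b ≠ 0 := fun hc => hb0 (hφ_inj (by rw [hc, map_zero]))
  -- the norm identity N η' = a² + a b (T η) + b² (N η)
  have hη'k : algebraMap O₂ k₂ η'
      = algebraMap K k₂ (algebraMap O K a)
        + algebraMap K k₂ (algebraMap O K b) * algebraMap O₂ k₂ η := by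
    rw [hab]
    simp only [map_add, map_mul, htower]
  have hqη := quad_identity hquad₂ (algebraMap O₂ k₂ η)
  rw [← hT, ← hN] at hqη
  have hqη' := quad_identity hquad₂ (algebraMap O₂ k₂ η')
  rw [← hT, ← hN] at hqη'
  rw [hη'k] at hqη'
  have hC := hcoeff
    (algebraMap O K (N η') - algebraMap O K (T η') * algebraMap O K a
      + algebraMap O K a ^ 2 - algebraMap O K b ^ 2 * algebraMap O K (N η))
    (2 * algebraMap O K a * algebraMap O K b
      + algebraMap O K b ^ 2 * algebraMap O K (T η)
      - algebraMap O K (T η') * algebraMap O K b)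
    (by
      simp only [map_add, map_sub, map_mul, map_pow, map_ofNat]
      linear_combination hqη' - (algebraMap K k₂ (algebraMap O K b)) ^ 2 * hqη)
  have ht' : algebraMap O K (T η')
      = 2 * algebraMap O K a + algebraMap O K b * algebraMap O K (T η) := by
    have h0 : (2 * algebraMap O K a + algebraMap O K b * algebraMap O K (T η)
        - algebraMap O K (T η')) * algebraMap O K b = 0 := by
      linear_combination hC.2
    rcases mul_eq_zero.mp h0 with h | h
    · linear_combination -h
    · exact absurd h hφb0
  have hnorm : N η' = a * a + a * b * T η + b * b * N η := by
    apply hφ_inj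
    simp only [map_add, map_mul]
    linear_combination hC.1 + algebraMap O K a * ht'
  -- final congruence argument
  have hp2dvd : π ^ 2 ∣ (N η' - N η) := by
    rw [← hmem2]
    have : N η' - N η = (N η' - a₂) - (N η - a₂) := by ring
    rw [this]
    exact sub_mem (hple hη') (hple hη)
  obtain ⟨w, hw⟩ := hnπ
  have hwnotp : ¬ π ∣ w := by
    intro hc
    obtain ⟨w2, hw2⟩ := hc
    exact hnπ2 ⟨w2, by rw [hw, hw2]; ring⟩
  have hb2 : π ∣ (b * b - 1) := by
    have h1 : π ^ 2 ∣ (b * b - 1) * N η := by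
      have heq : (b * b - 1) * N η = (N η' - N η) - (a * a + a * b * T η) := by
        rw [hnorm]; ring
      rw [heq]
      obtain ⟨a₁, ha₁⟩ := hπa
      obtain ⟨t₁, ht₁⟩ := hTπ
      refine dvd_sub hp2dvd (dvd_add ⟨a₁ * a₁, by rw [ha₁]; ring⟩ ⟨a₁ * b * t₁, by
        rw [ha₁, ht₁]; ring⟩)
    rw [hw] at h1
    obtain ⟨c, hc⟩ := h1
    have h2 : (b * b - 1) * w = π * c := by
      apply mul_left_cancel₀ hπ.ne_zero
      linear_combination hc
    exact (hπp.2.2 _ _ (h2 ▸ dvd_mul_right π c)).resolve_right hwnotp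
  have h2O : π ∣ (2 : O) := by
    rw [← hmem1]
    have h2m : (2 : O) ∈ Ideal.span {(2 : O)} := Ideal.mem_span_singleton_self 2
    rw [hm] at h2m
    exact Ideal.pow_le_self (by omega) h2m
  have hb1 : π ∣ (b - 1) := by
    have hfac : π ∣ (b - 1) * (b + 1) := by
      have : (b - 1) * (b + 1) = b * b - 1 := by ring
      rw [this]; exact hb2
    rcases hπp.2.2 _ _ hfac with h | h
    · exact h
    · have : b - 1 = (b + 1) - 2 := by ring
      rw [this]
      exact dvd_sub h h2O
  obtain ⟨f, hf⟩ := hb1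
  obtain ⟨e, he⟩ := hπa
  refine ⟨e, f, ?_⟩
  rw [hab, show a = e * π by rw [he]; ring, show b = 1 + f * π by linear_combination hf]
end

section
/- Let k_1 ≠ k_2 be ramified quadratic extensions of a dyadic local field K with ℓ_1 = ℓ_2 = ℓ, δ_1 = δ_2 = δ, and ℓ ≤ i < δ. Suppose η ∈ O_{k_2} satisfies ord_K(Tr_{k_2/K}(η) - a_1) = i exactly and N_{k_2/K}(η) ≡ a_2 (mod p^{i+1}). Then any η' ∈ O_{k_2} with Tr_{k_2/K}(η') ≡ a_1 (mod p^i) and N_{k_2/K}(η') ≡ a_2 (mod p^{i+1}) also satisfies ord_K(Tr_{k_2/K}(η') - a_1) = i exactly. -/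
set_option synthInstance.maxHeartbeats 1000000
set_option maxHeartbeats 1000000
set_option linter.unusedSectionVars false

section S13aux
variable {R : Type*} [CommRing R] [IsDomain R] {ϖ : R}

theorem s13_emul (hϖ : Prime ϖ) {a b : ℕ} {x y : R}
    (h1 : ϖ ^ a ∣ x) (h1' : ¬ϖ ^ (a + 1) ∣ x)
    (h2 : ϖ ^ b ∣ y) (h2' : ¬ϖ ^ (b + 1) ∣ y) :
    ϖ ^ (a + b) ∣ x * y ∧ ¬ϖ ^ (a + b + 1) ∣ x * y := by
  obtain ⟨x', rfl⟩ := h1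
  obtain ⟨y', rfl⟩ := h2
  have hx' : ¬ϖ ∣ x' := fun ⟨c, hc⟩ => h1' ⟨c, by rw [hc]; ring⟩
  have hy' : ¬ϖ ∣ y' := fun ⟨c, hc⟩ => h2' ⟨c, by rw [hc]; ring⟩
  refine ⟨⟨x' * y', by ring⟩, ?_⟩
  rintro ⟨c, hc⟩
  have hne : (ϖ : R) ^ (a + b) ≠ 0 := pow_ne_zero _ hϖ.ne_zero
  have hd : ϖ ∣ x' * y' := ⟨c, by
    apply mul_left_cancel₀ hne
    rw [show ϖ ^ (a + b) * (x' * y') = ϖ ^ a * x' * (ϖ ^ b * y') by ring, hc]; ring⟩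
  rcases hϖ.dvd_mul.mp hd with h | h
  · exact hx' h
  · exact hy' h

theorem s13_eadd {a b : ℕ} {x y : R}
    (h1 : ϖ ^ a ∣ x) (h1' : ¬ϖ ^ (a + 1) ∣ x) (hab : a < b) (h2 : ϖ ^ b ∣ y) :
    ϖ ^ a ∣ x + y ∧ ¬ϖ ^ (a + 1) ∣ x + y := by
  refine ⟨dvd_add h1 ((pow_dvd_pow ϖ hab.le).trans h2), fun hd => h1' ?_⟩
  have h3 : ϖ ^ (a + 1) ∣ y := (pow_dvd_pow ϖ hab).trans h2
  simpa using dvd_sub hd h3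

theorem s13_esub {a b : ℕ} {x y : R}
    (h1 : ϖ ^ a ∣ x) (h1' : ¬ϖ ^ (a + 1) ∣ x) (hab : a < b) (h2 : ϖ ^ b ∣ y) :
    ϖ ^ a ∣ x - y ∧ ¬ϖ ^ (a + 1) ∣ x - y := by
  rw [sub_eq_add_neg]
  exact s13_eadd h1 h1' hab ((dvd_neg).mpr h2)

theorem s13_eunique {a b : ℕ} {x : R}
    (h1 : ϖ ^ a ∣ x) (h1' : ¬ϖ ^ (a + 1) ∣ x)
    (h2 : ϖ ^ b ∣ x) (h2' : ¬ϖ ^ (b + 1) ∣ x) : a = b := by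
  by_contra h
  rcases Nat.lt_or_ge a b with hl | hl
  · exact h1' ((pow_dvd_pow ϖ hl).trans h2)
  · exact h2' ((pow_dvd_pow ϖ (lt_of_le_of_ne hl (Ne.symm h))).trans h1)

theorem s13_eassoc (hϖ : Prime ϖ) {k : ℕ} {x : R} (h : Associated (ϖ ^ k) x) :
    ϖ ^ k ∣ x ∧ ¬ϖ ^ (k + 1) ∣ x := by
  refine ⟨h.dvd, fun hd => ?_⟩
  obtain ⟨c, hc⟩ := hd.trans h.symm.dvd
  have hne : (ϖ : R) ^ k ≠ 0 := pow_ne_zero _ hϖ.ne_zero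
  have h1 : (1 : R) = ϖ * c := by
    apply mul_left_cancel₀ hne
    linear_combination hc
  exact hϖ.not_isUnit (IsUnit.of_mul_eq_one _ h1.symm)

theorem s13_eexists [IsDiscreteValuationRing R] (hϖ : Irreducible ϖ) {x : R} (hx : x ≠ 0) :
    ∃ n : ℕ, ϖ ^ n ∣ x ∧ ¬ϖ ^ (n + 1) ∣ x := by
  obtain ⟨n, u, rfl⟩ := IsDiscreteValuationRing.eq_unit_mul_pow_irreducible hx hϖ
  refine ⟨n, ⟨u, by ring⟩, fun ⟨c, hc⟩ => ?_⟩
  have hne : (ϖ : R) ^ n ≠ 0 := pow_ne_zero _ hϖ.ne_zero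
  have hu : (u : R) = ϖ * c := by
    apply mul_left_cancel₀ hne
    linear_combination hc
  exact hϖ.not_isUnit (isUnit_of_dvd_unit ⟨c, hu⟩ u.isUnit)

end S13aux

open Module in
/-- In a quadratic field extension, every element satisfies `x² - (tr x)·x + norm x = 0`. -/
theorem quad_charpoly {K L : Type*} [Field K] [Field L] [Algebra K L]
    (h2 : Module.finrank K L = 2) (x : L) :
    x ^ 2 - algebraMap K L (Algebra.trace K L x) * x + algebraMap K L (Algebra.norm K x) = 0 := by
  have : Module.Finite K L := Module.finite_of_finrank_pos (by rw [h2]; norm_num)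
  by_cases hx : ∃ c : K, algebraMap K L c = x
  · obtain ⟨c, rfl⟩ := hx
    rw [Algebra.trace_algebraMap, Algebra.norm_algebraMap, h2]
    rw [two_smul, map_add, map_pow]
    ring
  · have hli : LinearIndependent K ![(1 : L), x] := by
      rw [linearIndependent_fin2]
      refine ⟨by simpa using fun hx0 => hx ⟨0, by simp [hx0.symm]⟩, fun a ha => ?_⟩
      simp only [Matrix.cons_val_one, Matrix.head_cons, Matrix.cons_val_zero] at ha
      rcases eq_or_ne a 0 with rfl | ha0
      · rw [zero_smul] at ha; exact one_ne_zero ha.symm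
      · refine hx ⟨a⁻¹, ?_⟩
        rw [map_inv₀]
        rw [Algebra.smul_def] at ha
        exact (eq_inv_of_mul_eq_one_right ha).symm
    let b : Basis (Fin 2) K L := basisOfLinearIndependentOfCardEqFinrank hli (by simp [h2])
    have hb0 : b 0 = 1 := by simp [b]
    have hb1 : b 1 = x := by simp [b]
    have htr := Algebra.trace_eq_matrix_trace b x
    have hnm := Algebra.norm_eq_matrix_det b x
    rw [Matrix.trace_fin_two] at htr
    rw [Matrix.det_fin_two] at hnm
    simp only [Algebra.leftMulMatrix_eq_repr_mul] at htr hnm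
    have hxb0 : x * b 0 = b 1 := by rw [hb0, hb1, mul_one]
    have h00 : b.repr (x * b 0) 0 = 0 := by rw [hxb0, b.repr_self]; simp
    have h10 : b.repr (x * b 0) 1 = 1 := by rw [hxb0, b.repr_self]; simp
    set r0 := b.repr (x * b 1) 0 with hr0
    set r1 := b.repr (x * b 1) 1 with hr1
    rw [h00] at htr hnm
    rw [h10] at hnm
    have hx2 : x * b 1 = r0 • b 0 + r1 • b 1 := by
      have := b.sum_repr (x * b 1)
      rw [Fin.sum_univ_two] at this
      exact this.symm
    rw [hb0, hb1] at hx2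
    rw [sq, hx2, htr, hnm, Algebra.smul_def, Algebra.smul_def]
    simp only [map_add, map_sub, map_mul, map_zero, map_one, mul_one, zero_mul, zero_add,
      zero_sub, map_neg]
    ring

/-- Let `k₁ ≠ k₂` be ramified quadratic extensions of a dyadic local
field `K` with `ℓ₁ = ℓ₂ = ℓ`, `δ₁ = δ₂ = δ`, and `ℓ ≤ i < δ`.  Suppose `η ∈ O_{k₂}`
satisfies `ord_K(Tr(η) - a₁) = i` exactly and `N(η) ≡ a₂ (mod p^{i+1})`.  Then any
`η' ∈ O_{k₂}` with `Tr(η') ≡ a₁ (mod p^i)` and `N(η') ≡ a₂ (mod p^{i+1})` also satisfies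
`ord_K(Tr(η') - a₁) = i` exactly. -/
theorem exact_trace_order_invariant
    (O : Type*) [CommRing O] [IsDomain O] [IsDiscreteValuationRing O]
    (K : Type*) [Field K] [Algebra O K] [IsFractionRing O K] [CharZero K]
    (m : ℕ) (hm1 : 1 ≤ m)
    (hm : Ideal.span {(2 : O)} = (IsLocalRing.maximalIdeal O) ^ m)
    (p : Ideal O) (hp : p = IsLocalRing.maximalIdeal O)
    (O₂ : Type*) [CommRing O₂] [IsDomain O₂] [IsDiscreteValuationRing O₂]
    (k₂ : Type*) [Field k₂] [Algebra O₂ k₂] [IsFractionRing O₂ k₂]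
    [Algebra O O₂] [Algebra K k₂] [Algebra O k₂]
    [IsScalarTower O K k₂] [IsScalarTower O O₂ k₂]
    (hquad₂ : Module.finrank K k₂ = 2)
    (hram₂ : (IsLocalRing.maximalIdeal O).map (algebraMap O O₂) =
      (IsLocalRing.maximalIdeal O₂) ^ 2)
    (T N : O₂ → O)
    (hT : ∀ η : O₂, algebraMap O K (T η) = Algebra.trace K k₂ (algebraMap O₂ k₂ η))
    (hN : ∀ η : O₂, algebraMap O K (N η) = Algebra.norm K (algebraMap O₂ k₂ η))
    (a₁ a₂ : O) (ha₁ : a₁ ∈ p) (ha₂ : a₂ ∈ p) (ha₂' : a₂ ∉ p ^ 2)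
    (hdist : ∀ z : k₂, z ^ 2 + algebraMap O k₂ a₁ * z + algebraMap O k₂ a₂ ≠ 0)
    (δ : ℕ) (hδ₁ : Ideal.span {a₁ ^ 2 - 4 * a₂} = p ^ δ)
    (π₂ : O₂) (hπ₂ : Irreducible π₂)
    (hδ₂ : Ideal.span {(T π₂) ^ 2 - 4 * N π₂} = p ^ δ)
    (i : ℕ) (hi₁ : (δ + 1) / 2 ≤ i) (hi₂ : i < δ)
    (η : O₂) (hηT : T η - a₁ ∈ p ^ i) (hηT' : T η - a₁ ∉ p ^ (i + 1))
    (hηN : N η - a₂ ∈ p ^ (i + 1))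
    :
    ∀ η' : O₂, T η' - a₁ ∈ p ^ i → N η' - a₂ ∈ p ^ (i + 1) →
      T η' - a₁ ∉ p ^ (i + 1) := by
  intro η' hT'i hN'i hT'succ
  set f := algebraMap O O₂ with hf
  obtain ⟨π, hπ⟩ := IsDiscreteValuationRing.exists_irreducible O
  have hπP : Prime π := hπ.prime
  have hπ₂P : Prime π₂ := hπ₂.prime
  have hmax : IsLocalRing.maximalIdeal O = Ideal.span {π} :=
    (IsDiscreteValuationRing.irreducible_iff_uniformizer π).mp hπ
  have hmax₂ : IsLocalRing.maximalIdeal O₂ = Ideal.span {π₂} :=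
    (IsDiscreteValuationRing.irreducible_iff_uniformizer π₂).mp hπ₂
  have hmem : ∀ (j : ℕ) (x : O), x ∈ p ^ j ↔ π ^ j ∣ x := by
    intro j x
    rw [hp, hmax, Ideal.span_singleton_pow, Ideal.mem_span_singleton]
  -- `f π` is associated to `π₂ ^ 2`
  have hspan : Ideal.span {f π} = Ideal.span {π₂ ^ 2} := by
    have h1 : (IsLocalRing.maximalIdeal O).map f = Ideal.span {f π} := by
      rw [hmax, Ideal.map_span, Set.image_singleton]
    rw [← h1, hram₂, hmax₂, Ideal.span_singleton_pow]
  have hA : Associated (π₂ ^ 2) (f π) :=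
    (Ideal.span_singleton_eq_span_singleton.mp hspan).symm
  have hunit : ∀ y : O, ¬π ∣ y → IsUnit y := by
    intro y hy
    by_contra hu
    have hmem' : y ∈ Ideal.span {π} := by
      rw [← hmax]; exact (IsLocalRing.mem_maximalIdeal y).mpr (mem_nonunits_iff.mpr hu)
    exact hy (Ideal.mem_span_singleton.mp hmem')
  -- the map `f` doubles orders
  have hDf : ∀ (j : ℕ) (x : O), π ^ j ∣ x → π₂ ^ (2 * j) ∣ f x := by
    rintro j x ⟨y, rfl⟩
    rw [map_mul, map_pow]
    refine dvd_mul_of_dvd_left ?_ _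
    rw [pow_mul]
    exact (Associated.pow_pow hA).dvd
  have hEf : ∀ (j : ℕ) (x : O), π ^ j ∣ x → ¬π ^ (j + 1) ∣ x →
      π₂ ^ (2 * j) ∣ f x ∧ ¬π₂ ^ (2 * j + 1) ∣ f x := by
    intro j x h h'
    obtain ⟨y, rfl⟩ := h
    have hy : ¬π ∣ y := fun ⟨c, hc⟩ => h' ⟨c, by rw [hc]; ring⟩
    obtain ⟨u, hu⟩ := (hunit y hy).map f
    apply s13_eassoc hπ₂P
    have h1 : Associated (π₂ ^ (2 * j)) ((f π) ^ j) := by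
      rw [pow_mul]; exact Associated.pow_pow hA
    have h2 : Associated ((f π) ^ j) (f (π ^ j * y)) := by
      rw [map_mul, map_pow, ← hu]
      exact ⟨u, rfl⟩
    exact h1.trans h2
  -- O-side order facts
  have hti : π ^ i ∣ (T η - a₁) := (hmem i _).mp hηT
  have hti' : ¬π ^ (i + 1) ∣ (T η - a₁) := fun h => hηT' ((hmem _ _).mpr h)
  have hn : π ^ (i + 1) ∣ (N η - a₂) := (hmem _ _).mp hηN
  have ht'd : π ^ (i + 1) ∣ (T η' - a₁) := (hmem _ _).mp hT'succ
  have hn'd : π ^ (i + 1) ∣ (N η' - a₂) := (hmem _ _).mp hN'i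
  have ha₁d : π ∣ a₁ := by
    have h := ha₁
    rw [hp, hmax, Ideal.mem_span_singleton] at h; exact h
  have ha₂d : π ∣ a₂ := by
    have h := ha₂
    rw [hp, hmax, Ideal.mem_span_singleton] at h; exact h
  have ha₂d' : ¬π ^ 2 ∣ a₂ := fun hd => ha₂' ((hmem 2 a₂).mpr hd)
  have h2O : π ^ m ∣ (2 : O) ∧ ¬π ^ (m + 1) ∣ (2 : O) := by
    apply s13_eassoc hπP
    have hsp : Ideal.span {(2 : O)} = Ideal.span {π ^ m} := by
      rw [hm, hmax, Ideal.span_singleton_pow]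
    exact (Ideal.span_singleton_eq_span_singleton.mp hsp).symm
  have hD₁ : π ^ δ ∣ (a₁ ^ 2 - 4 * a₂) ∧ ¬π ^ (δ + 1) ∣ (a₁ ^ 2 - 4 * a₂) := by
    apply s13_eassoc hπP
    have hsp : Ideal.span {a₁ ^ 2 - 4 * a₂} = Ideal.span {π ^ δ} := by
      rw [hδ₁, hp, hmax, Ideal.span_singleton_pow]
    exact (Ideal.span_singleton_eq_span_singleton.mp hsp).symm
  -- δ ≤ 2m + 1
  have h4O : π ^ (m + m) ∣ (4 : O) ∧ ¬π ^ (m + m + 1) ∣ (4 : O) := by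
    have h := s13_emul hπP h2O.1 h2O.2 h2O.1 h2O.2
    rw [show (2 : O) * 2 = 4 by norm_num] at h
    exact h
  have ha₂E : π ^ 1 ∣ a₂ ∧ ¬π ^ (1 + 1) ∣ a₂ := ⟨by rwa [pow_one], ha₂d'⟩
  have h4a₂ := s13_emul hπP h4O.1 h4O.2 ha₂E.1 ha₂E.2
  have hδle : δ ≤ 2 * m + 1 := by
    by_contra hgt
    push_neg at hgt
    have ha₁sq : π ^ (m + m + 1) ∣ a₁ ^ 2 ∧ ¬π ^ (m + m + 1 + 1) ∣ a₁ ^ 2 := by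
      have h5 := s13_eadd h4a₂.1 h4a₂.2 (show m + m + 1 < δ by omega) hD₁.1
      rw [show (4 : O) * a₂ + (a₁ ^ 2 - 4 * a₂) = a₁ ^ 2 by ring] at h5
      exact h5
    have ha₁ne : a₁ ≠ 0 := by
      intro h0
      exact ha₁sq.2 (by rw [h0]; simp)
    obtain ⟨r, hr⟩ := s13_eexists hπ ha₁ne
    have hrr := s13_emul hπP hr.1 hr.2 hr.1 hr.2
    rw [← sq] at hrr
    have := s13_eunique hrr.1 hrr.2 ha₁sq.1 ha₁sq.2
    omega
  have hi1 : 1 ≤ i := by omega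
  -- O₂-side order facts
  have hft := hEf i _ hti hti'
  have hfn : π₂ ^ (2 * (i + 1)) ∣ f (N η - a₂) := hDf _ _ hn
  have hft' : π₂ ^ (2 * (i + 1)) ∣ f (T η' - a₁) := hDf _ _ ht'd
  have hfn' : π₂ ^ (2 * (i + 1)) ∣ f (N η' - a₂) := hDf _ _ hn'd
  have hfa₂E : π₂ ^ 2 ∣ f a₂ ∧ ¬π₂ ^ 3 ∣ f a₂ := hEf 1 a₂ ha₂E.1 ha₂E.2
  have hfa₁2 : π₂ ^ 2 ∣ f a₁ := hDf 1 a₁ (by rwa [pow_one])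
  have hfD₁E := hEf δ _ hD₁.1 hD₁.2
  -- the characteristic polynomial relation in O₂
  have hcp : ∀ ζ : O₂, ζ ^ 2 = f (T ζ) * ζ - f (N ζ) := by
    intro ζ
    apply IsFractionRing.injective O₂ k₂
    have h0 := quad_charpoly hquad₂ (algebraMap O₂ k₂ ζ)
    rw [← hT ζ, ← hN ζ, ← IsScalarTower.algebraMap_apply O K k₂,
      ← IsScalarTower.algebraMap_apply O K k₂,
      IsScalarTower.algebraMap_apply O O₂ k₂, IsScalarTower.algebraMap_apply O O₂ k₂] at h0
    rw [map_pow, map_sub, map_mul]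
    linear_combination h0
  have hG : ∀ ζ : O₂, ζ ^ 2 - f a₁ * ζ + f a₂ = f (T ζ - a₁) * ζ - f (N ζ - a₂) := by
    intro ζ
    have e1 : f (T ζ) = f a₁ + f (T ζ - a₁) := by rw [← map_add]; congr 1; ring
    have e2 : f (N ζ) = f a₂ + f (N ζ - a₂) := by rw [← map_add]; congr 1; ring
    linear_combination (hcp ζ) + ζ * e1 - e2
  -- ord(η) = 1
  have hTηd : π₂ ^ 2 ∣ f (T η) := by
    have heq : f (T η) = f a₁ + f (T η - a₁) := by rw [← map_add]; congr 1; ring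
    rw [heq]
    exact dvd_add hfa₁2 ((pow_dvd_pow π₂ (by omega : 2 ≤ 2 * i)).trans hft.1)
  have hNηE : π₂ ^ 2 ∣ f (N η) ∧ ¬π₂ ^ 3 ∣ f (N η) := by
    have heq : f (N η) = f a₂ + f (N η - a₂) := by rw [← map_add]; congr 1; ring
    have h := s13_eadd hfa₂E.1 hfa₂E.2 (show 2 < 2 * (i + 1) by omega) hfn
    rw [← heq] at h
    exact h
  have hNeq : f (N η) = η * (f (T η) - η) := by linear_combination (hcp η)
  have hπ₂d2 : π₂ ∣ π₂ ^ 2 := dvd_pow_self π₂ two_ne_zero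
  have hη1 : π₂ ∣ η ∧ ¬π₂ ^ 2 ∣ η := by
    constructor
    · by_contra h
      have h2 : ¬π₂ ∣ (f (T η) - η) := fun hd => h (by
        have h3 : π₂ ∣ f (T η) := hπ₂d2.trans hTηd
        simpa using dvd_sub h3 hd)
      have hd : π₂ ∣ f (N η) := hπ₂d2.trans hNηE.1
      rw [hNeq] at hd
      rcases hπ₂P.dvd_mul.mp hd with h' | h'
      · exact h h'
      · exact h2 h'
    · intro h2
      have hd1 : π₂ ∣ η := hπ₂d2.trans h2
      have hd2 : π₂ ∣ f (T η) - η := dvd_sub (hπ₂d2.trans hTηd) hd1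
      refine hNηE.2 ?_
      rw [hNeq]
      have h3 : π₂ ^ 2 * π₂ ∣ η * (f (T η) - η) := mul_dvd_mul h2 hd2
      rw [← pow_succ] at h3
      exact h3
  -- exact order of G(η) is 2i+1, and G(η') is divisible by π₂^(2i+2)
  have hftη := s13_emul hπ₂P hft.1 hft.2 (show π₂ ^ 1 ∣ η by rw [pow_one]; exact hη1.1) hη1.2
  have hGηE := s13_esub hftη.1 hftη.2 (show 2 * i + 1 < 2 * (i + 1) by omega) hfn
  have hGη'd : π₂ ^ (2 * i + 2) ∣ (f (T η' - a₁) * η' - f (N η' - a₂)) := by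
    refine dvd_sub ?_ ((pow_dvd_pow π₂ (by omega)).trans hfn')
    exact dvd_mul_of_dvd_left ((pow_dvd_pow π₂ (by omega)).trans hft') η'
  have hABE : π₂ ^ (2 * i + 1) ∣ (η - η') * (η + η' - f a₁) ∧
      ¬π₂ ^ (2 * i + 1 + 1) ∣ (η - η') * (η + η' - f a₁) := by
    have h1 := s13_esub hGηE.1 hGηE.2 (show 2 * i + 1 < 2 * i + 2 by omega) hGη'd
    rw [← hG η, ← hG η'] at h1
    rw [show (η ^ 2 - f a₁ * η + f a₂) - (η' ^ 2 - f a₁ * η' + f a₂) =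
      (η - η') * (η + η' - f a₁) by ring] at h1
    exact h1
  -- exact order of (2η - a₁)² is 2δ
  have hsq : ((2 : O₂) * η - f a₁) ^ 2 =
      f (a₁ ^ 2 - 4 * a₂) + 4 * (f (T η - a₁) * η) - 4 * f (N η - a₂) := by
    have e := hG η
    have hfD : f (a₁ ^ 2 - 4 * a₂) = (f a₁) ^ 2 - 4 * f a₂ := by
      rw [map_sub, map_pow, map_mul, map_ofNat]
    linear_combination 4 * e - hfD
  have h4E : π₂ ^ (4 * m) ∣ (4 : O₂) ∧ ¬π₂ ^ (4 * m + 1) ∣ (4 : O₂) := by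
    have hf2E := hEf m 2 h2O.1 h2O.2
    rw [map_ofNat] at hf2E
    have h := s13_emul hπ₂P hf2E.1 hf2E.2 hf2E.1 hf2E.2
    rw [show (2 : O₂) * 2 = 4 by norm_num,
      show 2 * m + 2 * m = 4 * m by ring] at h
    exact h
  have hterm1 := s13_emul hπ₂P h4E.1 h4E.2 hftη.1 hftη.2
  have hterm2 : π₂ ^ (4 * m + (2 * i + 2)) ∣ (4 : O₂) * f (N η - a₂) := by
    rw [pow_add]
    exact mul_dvd_mul h4E.1 ((pow_dvd_pow _ (by omega : 2 * i + 2 ≤ 2 * (i + 1))).trans hfn)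
  have hsum1 := s13_eadd hfD₁E.1 hfD₁E.2 (show 2 * δ < 4 * m + (2 * i + 1) by omega) hterm1.1
  have hsum2 := s13_esub hsum1.1 hsum1.2 (show 2 * δ < 4 * m + (2 * i + 2) by omega) hterm2
  rw [← hsq] at hsum2
  -- hence ord(2η - a₁) = δ
  have hsne : (2 : O₂) * η - f a₁ ≠ 0 := by
    intro h0
    exact hsum2.2 (by rw [h0]; simp)
  obtain ⟨r, hr⟩ := s13_eexists hπ₂ hsne
  have hrsq := s13_emul hπ₂P hr.1 hr.2 hr.1 hr.2
  rw [← sq] at hrsq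
  have hrδ : r + r = 2 * δ := s13_eunique hrsq.1 hrsq.2 hsum2.1 hsum2.2
  have hrδ' : r = δ := by omega
  have hsE : π₂ ^ δ ∣ (2 : O₂) * η - f a₁ ∧ ¬π₂ ^ (δ + 1) ∣ (2 : O₂) * η - f a₁ :=
    hrδ' ▸ hr
  -- final contradiction
  have hA0 : η - η' ≠ 0 := by
    intro h0; exact hABE.2 (by rw [h0]; simp)
  have hB0 : η + η' - f a₁ ≠ 0 := by
    intro h0; exact hABE.2 (by rw [h0]; simp)
  obtain ⟨a, ha⟩ := s13_eexists hπ₂ hA0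
  obtain ⟨b, hb⟩ := s13_eexists hπ₂ hB0
  have hab := s13_emul hπ₂P ha.1 ha.2 hb.1 hb.2
  have habs : a + b = 2 * i + 1 := s13_eunique hab.1 hab.2 hABE.1 hABE.2
  rcases lt_trichotomy a b with hlt | heq | hgt
  · have h5 := s13_eadd ha.1 ha.2 hlt hb.1
    rw [show (η - η') + (η + η' - f a₁) = (2 : O₂) * η - f a₁ by ring] at h5
    have haδ : a = δ := s13_eunique h5.1 h5.2 hsE.1 hsE.2
    omega
  · omega
  · have h5 := s13_eadd hb.1 hb.2 hgt ha.1
    rw [show (η + η' - f a₁) + (η - η') = (2 : O₂) * η - f a₁ by ring] at h5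
    have hbδ : b = δ := s13_eunique h5.1 h5.2 hsE.1 hsE.2
    omega
end

section
/- Let k_1 ≠ k_2 be ramified quadratic extensions of a dyadic local field K, with k_1 defined by Eisenstein polynomial z^2 + a_1 z + a_2. For 0 ≤ i_1 ≤ i_2 ≤ i_1 + 1, the set S_{i_1,i_2}(k_1,k_2) of classes η in O_{k_2}/π_2^{i_1+i_2}O_{k_2} satisfying Tr_{k_2/K}(η) ≡ a_1 (mod p^{i_1}) and N_{k_2/K}(η) ≡ a_2 (mod p^{i_2}) is well-defined: the two congruence conditions depend only on the class of η modulo π_2^{i_1+i_2}O_{k_2}. -/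
set_option synthInstance.maxHeartbeats 1000000
set_option maxHeartbeats 1000000

set_option linter.unusedSectionVars false

open Polynomial

private lemma matrix_charpoly_two' {R : Type*} [CommRing R] (M : Matrix (Fin 2) (Fin 2) R) :
    M.charpoly = X ^ 2 - C (Matrix.trace M) * X + C M.det := by
  rw [Matrix.charpoly, Matrix.det_fin_two]
  rw [Matrix.charmatrix_apply_eq, Matrix.charmatrix_apply_eq,
    Matrix.charmatrix_apply_ne _ _ _ (by decide), Matrix.charmatrix_apply_ne _ _ _ (by decide),
    Matrix.trace_fin_two, Matrix.det_fin_two]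
  simp only [map_add, map_mul, map_sub]
  ring

private lemma quad_self' {K L : Type*} [Field K] [Field L] [Algebra K L]
    (h2 : Module.finrank K L = 2) (z : L) :
    z ^ 2 - algebraMap K L (Algebra.trace K L z) * z
      + algebraMap K L (Algebra.norm K z) = 0 := by
  have : FiniteDimensional K L := FiniteDimensional.of_finrank_pos (by omega)
  let b : Module.Basis (Fin 2) K L := Module.finBasisOfFinrankEq K L h2
  have hM : (Algebra.leftMulMatrix b z).charpoly = (Algebra.lmul K L z).charpoly := by
    rw [Algebra.leftMulMatrix_apply, LinearMap.charpoly_toMatrix]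
  have h0 : Polynomial.aeval z ((Algebra.leftMulMatrix b z).charpoly) = 0 := by
    apply Algebra.lmul_injective (R := K) (A := L)
    rw [← Polynomial.aeval_algHom_apply (Algebra.lmul K L) z, hM, map_zero]
    exact LinearMap.aeval_self_charpoly _
  rw [matrix_charpoly_two', ← Algebra.trace_eq_matrix_trace b, ← Algebra.norm_eq_matrix_det b] at h0
  simpa using h0

private lemma trace_alg' {K L : Type*} [Field K] [Field L] [Algebra K L]
    (h2 : Module.finrank K L = 2) (c : K) :
    Algebra.trace K L (algebraMap K L c) = 2 * c := by
  have : FiniteDimensional K L := FiniteDimensional.of_finrank_pos (by omega)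
  rw [Algebra.trace_algebraMap, h2, nsmul_eq_mul]
  norm_num

private lemma norm_add_eq' {K L : Type*} [Field K] [Field L] [Algebra K L] [CharZero K]
    (h2 : Module.finrank K L = 2) (x y : L) :
    Algebra.norm K (x + y) = Algebra.norm K x + Algebra.norm K y
      + Algebra.trace K L x * Algebra.trace K L y - Algebra.trace K L (x * y) := by
  have : FiniteDimensional K L := FiniteDimensional.of_finrank_pos (by omega)
  have h1 := quad_self' h2 (x + y)
  have hx := quad_self' h2 x
  have hy := quad_self' h2 y
  rw [show Algebra.trace K L (x + y) = Algebra.trace K L x + Algebra.trace K L y from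
    map_add _ x y, map_add] at h1
  have key : algebraMap K L (Algebra.norm K (x + y)) =
      algebraMap K L (Algebra.norm K x) + algebraMap K L (Algebra.norm K y)
      + (Algebra.trace K L x) • y + (Algebra.trace K L y) • x - (2 : K) • (x * y) := by
    simp only [Algebra.smul_def, map_ofNat]
    linear_combination h1 - hx - hy
  have tkey := congrArg (Algebra.trace K L) key
  simp only [map_add, map_sub, map_smul, trace_alg' h2, smul_eq_mul] at tkey
  linear_combination tkey / 2

section dvraux
variable {O O₂ : Type*} [CommRing O] [IsDomain O] [IsDiscreteValuationRing O]
  [CommRing O₂] [IsDomain O₂] [IsDiscreteValuationRing O₂] [Algebra O O₂]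

private lemma aux_up {a₂ : O} {π₂ : O₂} {w : O₂ˣ}
    (hw : algebraMap O O₂ a₂ = (w : O₂) * π₂ ^ 2)
    (t : ℕ) (e : O) (h : a₂ ^ t ∣ e) : π₂ ^ (2 * t) ∣ algebraMap O O₂ e := by
  obtain ⟨e', rfl⟩ := h
  rw [map_mul, map_pow, hw, mul_pow, ← pow_mul]
  exact Dvd.dvd.mul_right (Dvd.dvd.mul_left dvd_rfl _) _

private lemma aux_down1 {a₂ : O} {π₂ : O₂} (ha₂ : Irreducible a₂) (hπ₂ : Irreducible π₂)
    (e : O) (h : π₂ ∣ algebraMap O O₂ e) : a₂ ∣ e := by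
  by_contra hnd
  have he : IsUnit e := by
    by_contra hne
    have : e ∈ IsLocalRing.maximalIdeal O := by
      rwa [IsLocalRing.mem_maximalIdeal, mem_nonunits_iff]
    rw [(IsDiscreteValuationRing.irreducible_iff_uniformizer a₂).mp ha₂,
      Ideal.mem_span_singleton] at this
    exact hnd this
  exact hπ₂.not_isUnit (isUnit_of_dvd_unit h (he.map (algebraMap O O₂)))

private lemma aux_down_odd {a₂ : O} {π₂ : O₂} {w : O₂ˣ}
    (ha₂ : Irreducible a₂) (hπ₂ : Irreducible π₂)
    (hw : algebraMap O O₂ a₂ = (w : O₂) * π₂ ^ 2) :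
    ∀ (t : ℕ) (e : O), π₂ ^ (2 * t + 1) ∣ algebraMap O O₂ e → a₂ ^ (t + 1) ∣ e := by
  intro t
  induction t with
  | zero => intro e h; simpa using aux_down1 ha₂ hπ₂ e (by simpa using h)
  | succ t ih =>
    intro e h
    have h1 : a₂ ∣ e := aux_down1 ha₂ hπ₂ e (dvd_trans (dvd_pow_self π₂ (by omega)) h)
    obtain ⟨e', rfl⟩ := h1
    rw [map_mul, hw] at h
    have h2 : π₂ ^ (2 * t + 1) ∣ algebraMap O O₂ e' := by
      have hne : (π₂ : O₂) ^ 2 ≠ 0 := pow_ne_zero _ hπ₂.ne_zero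
      have : π₂ ^ (2 * t + 1) * π₂ ^ 2 ∣ ((w : O₂) * algebraMap O O₂ e') * π₂ ^ 2 := by
        rw [show π₂ ^ (2 * t + 1) * π₂ ^ 2 = π₂ ^ (2 * (t+1) + 1) by ring]
        calc π₂ ^ (2 * (t+1) + 1) ∣ (w:O₂) * π₂ ^ 2 * algebraMap O O₂ e' := h
          _ = (w : O₂) * algebraMap O O₂ e' * π₂ ^ 2 := by ring
      have := (mul_dvd_mul_iff_right hne).mp this
      exact (Units.dvd_mul_left).mp this
    have h3 := mul_dvd_mul (dvd_refl a₂) (ih e' h2)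
    rwa [← pow_succ'] at h3

private lemma aux_down_even {a₂ : O} {π₂ : O₂} {w : O₂ˣ}
    (ha₂ : Irreducible a₂) (hπ₂ : Irreducible π₂)
    (hw : algebraMap O O₂ a₂ = (w : O₂) * π₂ ^ 2) :
    ∀ (t : ℕ) (e : O), π₂ ^ (2 * t) ∣ algebraMap O O₂ e → a₂ ^ t ∣ e := by
  intro t e h
  cases t with
  | zero => simp
  | succ t =>
    exact aux_down_odd ha₂ hπ₂ hw t e ((pow_dvd_pow π₂ (by omega)).trans h)

private lemma aux_split {a₂ : O} {π₂ : O₂} {w : O₂ˣ}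
    (ha₂ : Irreducible a₂) (hπ₂ : Irreducible π₂)
    (hw : algebraMap O O₂ a₂ = (w : O₂) * π₂ ^ 2) :
    ∀ (n : ℕ) (f g : O) (u v : O₂), IsUnit u → IsUnit v →
      π₂ ^ n ∣ (algebraMap O O₂ f * u + algebraMap O O₂ g * v * π₂) →
      π₂ ^ n ∣ algebraMap O O₂ f ∧ π₂ ^ n ∣ algebraMap O O₂ g * π₂ := by
  intro n
  induction n with
  | zero => intro f g u v _ _ _; simp
  | succ n ih =>
    intro f g u v hu hv h
    have hπS : π₂ ∣ algebraMap O O₂ f * u + algebraMap O O₂ g * v * π₂ :=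
      (dvd_pow_self π₂ (Nat.succ_ne_zero n)).trans h
    have hπf : π₂ ∣ algebraMap O O₂ f * u := by
      have := dvd_sub hπS (dvd_mul_left π₂ (algebraMap O O₂ g * v))
      simpa using this
    obtain ⟨u', rfl⟩ := hu
    have hπf' : π₂ ∣ algebraMap O O₂ f := (Units.dvd_mul_right).mp hπf
    obtain ⟨f', hf⟩ := aux_down1 ha₂ hπ₂ f hπf'
    subst hf
    have hrw : algebraMap O O₂ (a₂ * f') * u' + algebraMap O O₂ g * v * π₂
        = π₂ * (algebraMap O O₂ g * v + algebraMap O O₂ f' * ((w : O₂) * u' * π₂)) := by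
      rw [map_mul, hw]; ring
    rw [hrw, pow_succ'] at h
    have h2 := (mul_dvd_mul_iff_left hπ₂.ne_zero).mp h
    obtain ⟨h3, h4⟩ := ih g f' v ((w : O₂) * u') hv (w.isUnit.mul u'.isUnit)
      (by convert h2 using 2; ring)
    constructor
    · rw [map_mul, hw]
      have h5 : π₂ ^ (n+1) ∣ algebraMap O O₂ f' * π₂ * π₂ := by
        rw [pow_succ]; exact mul_dvd_mul h4 dvd_rfl
      have h6 : (w : O₂) * π₂ ^ 2 * algebraMap O O₂ f'
          = algebraMap O O₂ f' * π₂ * π₂ * w := by ring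
      rw [h6]
      exact h5.mul_right _
    · rw [pow_succ]; exact mul_dvd_mul h3 dvd_rfl

private lemma aux_zero {a₂ : O} (ha₂ : Irreducible a₂) (s : O)
    (hall : ∀ n : ℕ, a₂ ^ n ∣ s) : s = 0 := by
  by_contra hs
  obtain ⟨k, u, hfact⟩ := IsDiscreteValuationRing.eq_unit_mul_pow_irreducible hs ha₂
  have h := hall (k + 1)
  rw [hfact, pow_succ, mul_comm ((u : O)) (a₂ ^ k)] at h
  have : a₂ ∣ (u : O) := (mul_dvd_mul_iff_left (pow_ne_zero k ha₂.ne_zero)).mp h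
  exact ha₂.not_isUnit (isUnit_of_dvd_unit this u.isUnit)

end dvraux

section coords
variable {O K O₂ k₂ : Type*} [CommRing O] [IsDomain O] [IsDiscreteValuationRing O]
    [Field K] [Algebra O K] [IsFractionRing O K]
    [CommRing O₂] [IsDomain O₂] [IsDiscreteValuationRing O₂]
    [Field k₂] [Algebra O₂ k₂] [IsFractionRing O₂ k₂]
    [Algebra O O₂] [Algebra K k₂] [Algebra O k₂] [IsScalarTower O K k₂] [IsScalarTower O O₂ k₂]

private lemma aux_coords (hquad₂ : Module.finrank K k₂ = 2)
    {a₂ : O} {π₂ : O₂} {w : O₂ˣ} (ha₂ : Irreducible a₂) (hπ₂ : Irreducible π₂)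
    (hw : algebraMap O O₂ a₂ = (w : O₂) * π₂ ^ 2)
    (x : O₂) :
    ∃ f g q : O, q ≠ 0 ∧
      algebraMap O O₂ q * x = algebraMap O O₂ f + algebraMap O O₂ g * π₂ := by
  have hFD : FiniteDimensional K k₂ := FiniteDimensional.of_finrank_pos (by omega)
  set v : Fin 3 → k₂ := ![1, algebraMap O₂ k₂ π₂, algebraMap O₂ k₂ x] with hv
  have hnli : ¬ LinearIndependent K v := by
    intro h
    have := LinearIndependent.fintype_card_le_finrank h
    rw [hquad₂] at this
    simp at this
  obtain ⟨c, hc, i0, hi0⟩ := Fintype.not_linearIndependent_iff.mp hnli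
  obtain ⟨b, hb⟩ := IsLocalization.exist_integer_multiples_of_finite (nonZeroDivisors O) c
  choose d hd using hb
  have hOKinj : Function.Injective (algebraMap O K) := IsFractionRing.injective O K
  have hO₂inj : Function.Injective (algebraMap O₂ k₂) := IsFractionRing.injective O₂ k₂
  have hbne : algebraMap O K (b : O) ≠ 0 := by
    intro h0
    exact nonZeroDivisors.ne_zero b.prop (hOKinj (by simpa using h0))
  -- main relation in O₂
  have heq : algebraMap O O₂ (d 0) + algebraMap O O₂ (d 1) * π₂ + algebraMap O O₂ (d 2) * x
      = 0 := by
    apply hO₂inj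
    have hsum : (algebraMap O K (b : O)) • (∑ i, c i • v i) = 0 := by rw [hc, smul_zero]
    rw [Finset.smul_sum] at hsum
    simp only [smul_smul] at hsum
    have hco : ∀ i, algebraMap O K (b : O) * c i = algebraMap O K (d i) := by
      intro i; rw [hd i, Algebra.smul_def]
    simp only [hco] at hsum
    rw [Fin.sum_univ_three] at hsum
    simp only [hv, Matrix.cons_val_zero, Matrix.cons_val_one, Matrix.head_cons,
      Matrix.cons_val_two, Matrix.tail_cons] at hsum
    rw [map_add, map_add, map_mul, map_mul, map_zero]
    rw [← IsScalarTower.algebraMap_apply O O₂ k₂, ← IsScalarTower.algebraMap_apply O O₂ k₂,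
      ← IsScalarTower.algebraMap_apply O O₂ k₂]
    rw [IsScalarTower.algebraMap_apply O K k₂, IsScalarTower.algebraMap_apply O K k₂,
      IsScalarTower.algebraMap_apply O K k₂]
    simpa [Algebra.smul_def, mul_comm] using hsum
  have hdzero : ∀ i, d i = 0 → c i = 0 := by
    intro i hdi
    have := hd i
    rw [hdi, map_zero] at this
    have : algebraMap O K (b : O) * c i = 0 := by
      rw [Algebra.smul_def] at this; exact this.symm
    rcases mul_eq_zero.mp this with h | h
    · exact absurd h hbne
    · exact h
  by_cases hd2 : d 2 = 0
  · exfalso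
    rw [hd2, map_zero, zero_mul, add_zero] at heq
    -- d 0 = d 1 = 0
    have hsplit : ∀ n : ℕ, π₂ ^ n ∣ algebraMap O O₂ (d 0)
        ∧ π₂ ^ n ∣ algebraMap O O₂ (d 1) * π₂ := by
      intro n
      refine aux_split ha₂ hπ₂ hw n (d 0) (d 1) 1 1 isUnit_one isUnit_one ?_
      rw [mul_one, mul_one, heq]
      exact dvd_zero _
    have hd0 : d 0 = 0 := by
      apply aux_zero ha₂
      intro n
      exact aux_down_even ha₂ hπ₂ hw n (d 0) (hsplit (2 * n)).1
    have hd1 : d 1 = 0 := by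
      apply aux_zero ha₂
      intro n
      have h1 := (hsplit (2 * n + 2)).2
      have h2 : π₂ ^ (2 * n + 1) ∣ algebraMap O O₂ (d 1) := by
        have := (mul_dvd_mul_iff_right hπ₂.ne_zero).mp
          (show π₂ ^ (2 * n + 1) * π₂ ∣ algebraMap O O₂ (d 1) * π₂ by
            rw [← pow_succ]; exact h1)
        exact this
      exact (pow_dvd_pow a₂ (by omega)).trans (aux_down_odd ha₂ hπ₂ hw n (d 1) h2)
    have : ∀ i, c i = 0 := by
      intro i
      fin_cases i
      · exact hdzero 0 hd0
      · exact hdzero 1 hd1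
      · exact hdzero 2 hd2
    exact hi0 (this i0)
  · refine ⟨-(d 0), -(d 1), d 2, hd2, ?_⟩
    rw [map_neg, map_neg]
    linear_combination heq

end coords


/-- Let `k₁ ≠ k₂` be ramified quadratic extensions of a dyadic local
field `K`, with `k₁` defined by the Eisenstein polynomial `z² + a₁z + a₂`.  For
`0 ≤ i₁ ≤ i₂ ≤ i₁ + 1`, the congruence conditions `Tr(η) ≡ a₁ (mod p^{i₁})` and
`N(η) ≡ a₂ (mod p^{i₂})` depend only on the class of `η` modulo `π₂^{i₁+i₂}O₂`, i.e. they
are unchanged upon replacing `η` by `η + u` with `u ∈ p₂^{i₁+i₂}`. -/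
theorem S_well_defined
    (O : Type*) [CommRing O] [IsDomain O] [IsDiscreteValuationRing O]
    (K : Type*) [Field K] [Algebra O K] [IsFractionRing O K] [CharZero K]
    (m : ℕ) (hm1 : 1 ≤ m)
    (hm : Ideal.span {(2 : O)} = (IsLocalRing.maximalIdeal O) ^ m)
    (p : Ideal O) (hp : p = IsLocalRing.maximalIdeal O)
    (O₂ : Type*) [CommRing O₂] [IsDomain O₂] [IsDiscreteValuationRing O₂]
    (k₂ : Type*) [Field k₂] [Algebra O₂ k₂] [IsFractionRing O₂ k₂]
    [Algebra O O₂] [Algebra K k₂] [Algebra O k₂]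
    [IsScalarTower O K k₂] [IsScalarTower O O₂ k₂]
    (hquad₂ : Module.finrank K k₂ = 2)
    (hram₂ : (IsLocalRing.maximalIdeal O).map (algebraMap O O₂) =
      (IsLocalRing.maximalIdeal O₂) ^ 2)
    (T N : O₂ → O)
    (hT : ∀ η : O₂, algebraMap O K (T η) = Algebra.trace K k₂ (algebraMap O₂ k₂ η))
    (hN : ∀ η : O₂, algebraMap O K (N η) = Algebra.norm K (algebraMap O₂ k₂ η))
    (a₁ a₂ : O) (ha₁ : a₁ ∈ p) (ha₂ : a₂ ∈ p) (ha₂' : a₂ ∉ p ^ 2)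
    (hdist : ∀ z : k₂, z ^ 2 + algebraMap O k₂ a₁ * z + algebraMap O k₂ a₂ ≠ 0)
    (π₂ : O₂) (hπ₂ : Irreducible π₂)
    (δ₂ : ℕ) (hδ₂ : Ideal.span {(T π₂) ^ 2 - 4 * N π₂} = p ^ δ₂)
    (hδ₂2 : 2 ≤ δ₂)
    (i₁ i₂ : ℕ) (hi₁ : i₁ ≤ i₂) (hi₂ : i₂ ≤ i₁ + 1)
    (η u : O₂) (hu : u ∈ (IsLocalRing.maximalIdeal O₂) ^ (i₁ + i₂))
    :
    ((T (η + u) - a₁ ∈ p ^ i₁ ↔ T η - a₁ ∈ p ^ i₁) ∧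
      (N (η + u) - a₂ ∈ p ^ i₂ ↔ N η - a₂ ∈ p ^ i₂)) := by
  subst hp
  have hOKinj : Function.Injective (algebraMap O K) := IsFractionRing.injective O K
  have hO₂inj : Function.Injective (algebraMap O₂ k₂) := IsFractionRing.injective O₂ k₂
  have hFD : FiniteDimensional K k₂ := FiniteDimensional.of_finrank_pos (by omega)
  -- a₂ is irreducible
  have ha₂irr : Irreducible a₂ := by
    constructor
    · rw [IsLocalRing.mem_maximalIdeal] at ha₂
      exact ha₂
    · intro x y hxy
      by_contra hcon
      push_neg at hcon
      obtain ⟨hx, hy⟩ := hcon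
      apply ha₂'
      have hxm : x ∈ IsLocalRing.maximalIdeal O := by
        rw [IsLocalRing.mem_maximalIdeal]; exact hx
      have hym : y ∈ IsLocalRing.maximalIdeal O := by
        rw [IsLocalRing.mem_maximalIdeal]; exact hy
      rw [pow_two, hxy]
      exact Ideal.mul_mem_mul hxm hym
  have hmaxO : IsLocalRing.maximalIdeal O = Ideal.span {a₂} :=
    (IsDiscreteValuationRing.irreducible_iff_uniformizer a₂).mp ha₂irr
  have hmaxO₂ : IsLocalRing.maximalIdeal O₂ = Ideal.span {π₂} :=
    (IsDiscreteValuationRing.irreducible_iff_uniformizer π₂).mp hπ₂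
  have memp : ∀ (n : ℕ) (x : O), x ∈ (IsLocalRing.maximalIdeal O) ^ n ↔ a₂ ^ n ∣ x := by
    intro n x; rw [hmaxO, Ideal.span_singleton_pow, Ideal.mem_span_singleton]
  have memp₂ : ∀ (n : ℕ) (x : O₂), x ∈ (IsLocalRing.maximalIdeal O₂) ^ n ↔ π₂ ^ n ∣ x := by
    intro n x; rw [hmaxO₂, Ideal.span_singleton_pow, Ideal.mem_span_singleton]
  -- the unit w with ι a₂ = w * π₂²
  have hspan : Ideal.span {algebraMap O O₂ a₂} = Ideal.span {π₂ ^ 2} := by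
    have := hram₂
    rw [hmaxO, hmaxO₂, Ideal.map_span, Set.image_singleton, Ideal.span_singleton_pow] at this
    exact this
  have hassoc : Associated (π₂ ^ 2) (algebraMap O O₂ a₂) :=
    (Ideal.span_singleton_eq_span_singleton.mp hspan).symm
  obtain ⟨w, hw0⟩ := hassoc
  have hw' : algebraMap O O₂ a₂ = (w : O₂) * π₂ ^ 2 := by rw [← hw0]; ring
  -- a₂ ∣ 2
  have ha₂2 : a₂ ∣ (2 : O) := by
    have h2m : (2 : O) ∈ IsLocalRing.maximalIdeal O := by
      have h1 : (2 : O) ∈ Ideal.span {(2 : O)} := Ideal.mem_span_singleton_self _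
      rw [hm] at h1
      have h2 : (IsLocalRing.maximalIdeal O) ^ m ≤ (IsLocalRing.maximalIdeal O) ^ 1 :=
        Ideal.pow_le_pow_right hm1
      simpa using h2 h1
    rwa [hmaxO, Ideal.mem_span_singleton] at h2m
  have hprime : Prime a₂ := (irreducible_iff_prime).mp ha₂irr
  -- a₂ ∣ T π₂
  have haTπ₂ : a₂ ∣ T π₂ := by
    have hD : a₂ ∣ (T π₂ ^ 2 - 4 * N π₂) := by
      have h1 : (T π₂ ^ 2 - 4 * N π₂) ∈ Ideal.span {T π₂ ^ 2 - 4 * N π₂} :=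
        Ideal.mem_span_singleton_self _
      rw [hδ₂] at h1
      have h2 : (IsLocalRing.maximalIdeal O) ^ δ₂ ≤ (IsLocalRing.maximalIdeal O) ^ 1 :=
        Ideal.pow_le_pow_right (by omega)
      have h3 := h2 h1
      rwa [pow_one, hmaxO, Ideal.mem_span_singleton] at h3
    have h4 : a₂ ∣ 4 * N π₂ := by
      have : a₂ ∣ (4 : O) := ha₂2.trans ⟨2, by norm_num⟩
      exact this.mul_right _
    have hsq : a₂ ∣ T π₂ ^ 2 := by
      have := dvd_add hD h4
      simpa using this
    exact hprime.dvd_of_dvd_pow hsq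
  -- helpers for trace
  have halg : ∀ c : O, algebraMap O k₂ c = algebraMap K k₂ (algebraMap O K c) := fun c =>
    IsScalarTower.algebraMap_apply O K k₂ c
  have halg₂ : ∀ c : O, algebraMap O k₂ c = algebraMap O₂ k₂ (algebraMap O O₂ c) := fun c =>
    IsScalarTower.algebraMap_apply O O₂ k₂ c
  have htrmul : ∀ (c : O) (z : k₂),
      Algebra.trace K k₂ (algebraMap O k₂ c * z) = algebraMap O K c * Algebra.trace K k₂ z := by
    intro c z
    rw [halg, ← Algebra.smul_def, map_smul, smul_eq_mul]
  have htralg : ∀ c : O, Algebra.trace K k₂ (algebraMap O k₂ c) = 2 * algebraMap O K c := by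
    intro c
    rw [halg]
    exact trace_alg' hquad₂ _
  -- THE TRACE BOUND
  have TB : ∀ (j : ℕ) (x : O₂), π₂ ^ j ∣ x → a₂ ^ (j / 2 + 1) ∣ T x := by
    intro j x hx
    obtain ⟨f, g, q, hq0, hfg⟩ := aux_coords hquad₂ ha₂irr hπ₂ hw' x
    obtain ⟨s, uq, hqfact⟩ := IsDiscreteValuationRing.eq_unit_mul_pow_irreducible hq0 ha₂irr
    have h1 : π₂ ^ (2 * s + j) ∣ algebraMap O O₂ q * x := by
      rw [pow_add]
      exact mul_dvd_mul (aux_up hw' s q ⟨(uq : O), by rw [hqfact]; ring⟩) hx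
    rw [hfg] at h1
    obtain ⟨h2, h3⟩ := aux_split ha₂irr hπ₂ hw' (2 * s + j) f g 1 1 isUnit_one isUnit_one
      (by rw [mul_one, mul_one]; exact h1)
    have hf : a₂ ^ (s + j / 2) ∣ f :=
      aux_down_even ha₂irr hπ₂ hw' (s + j / 2) f
        ((pow_dvd_pow π₂ (by omega)).trans h2)
    have hg : a₂ ^ (s + j / 2) ∣ g := by
      rcases Nat.eq_zero_or_pos (s + j / 2) with h0 | hpos
    
      · rw [h0, pow_zero]; exact one_dvd _
      · obtain ⟨t, ht⟩ : ∃ t, s + j / 2 = t + 1 := ⟨s + j / 2 - 1, by omega⟩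
        have hgodd : π₂ ^ (2 * t + 1) ∣ algebraMap O O₂ g := by
          have hd1 : π₂ ^ (2 * t + 1) * π₂ ∣ algebraMap O O₂ g * π₂ := by
            rw [← pow_succ]
            exact (pow_dvd_pow π₂ (by omega)).trans h3
          exact (mul_dvd_mul_iff_right hπ₂.ne_zero).mp hd1
        rw [ht]
        exact aux_down_odd ha₂irr hπ₂ hw' t g hgodd
    -- trace relation q * T x = 2 * f + g * T π₂
    have htr : q * T x = 2 * f + g * T π₂ := by
      apply hOKinj
      have hmap : algebraMap O k₂ q * algebraMap O₂ k₂ x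
          = algebraMap O k₂ f + algebraMap O k₂ g * algebraMap O₂ k₂ π₂ := by
        rw [halg₂, halg₂, halg₂, ← map_mul, hfg, map_add, map_mul]
      have := congrArg (Algebra.trace K k₂) hmap
      rw [htrmul, map_add, htrmul, htralg] at this
      rw [map_mul, map_add, map_mul, map_mul, hT, hT]
      rw [this, map_ofNat]
    have hdvdsum : a₂ ^ (s + (j / 2 + 1)) ∣ q * T x := by
      rw [htr]
      apply dvd_add
      · have hpow : a₂ ^ (s + (j / 2 + 1)) = a₂ ^ (s + j / 2) * a₂ := by ring
        rw [hpow, mul_comm (2 : O) f]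
        exact mul_dvd_mul hf ha₂2
      · have hpow : a₂ ^ (s + (j / 2 + 1)) = a₂ ^ (s + j / 2) * a₂ := by ring
        rw [hpow]
        exact mul_dvd_mul hg haTπ₂
    rw [hqfact] at hdvdsum
    have hcancel : a₂ ^ (j / 2 + 1) ∣ (uq : O) * T x := by
      have heq : (uq : O) * a₂ ^ s * T x = a₂ ^ s * ((uq : O) * T x) := by ring
      rw [heq, pow_add] at hdvdsum
      exact (mul_dvd_mul_iff_left (pow_ne_zero s ha₂irr.ne_zero)).mp hdvdsum
    exact (Units.dvd_mul_left).mp hcancel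
  -- trace of u is small
  have hTu : a₂ ^ i₂ ∣ T u := by
    have := TB (i₁ + i₂) u ((memp₂ _ _).mp hu)
    exact (pow_dvd_pow a₂ (by omega)).trans this
  -- additivity of T
  have hTadd : T (η + u) = T η + T u := by
    apply hOKinj
    rw [hT, map_add (algebraMap O₂ k₂), map_add (Algebra.trace K k₂), map_add, hT, hT]
  -- additivity formula for N
  have hNadd : N (η + u) = N η + N u + T η * T u - T (η * u) := by
    apply hOKinj
    rw [map_sub, map_add, map_add, map_mul]
    rw [hN, hN, hN, hT, hT, hT]
    rw [map_add (algebraMap O₂ k₂), map_mul (algebraMap O₂ k₂)]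
    exact norm_add_eq' hquad₂ _ _
  -- N u is small
  have hNu : a₂ ^ i₂ ∣ N u := by
    have hq := quad_self' hquad₂ (algebraMap O₂ k₂ u)
    have hid : algebraMap O O₂ (N u) = algebraMap O O₂ (T u) * u - u * u := by
      apply hO₂inj
      rw [map_sub, map_mul, map_mul, ← halg₂, ← halg₂, halg, halg, hT, hN]
      linear_combination hq
    have hdvd : π₂ ^ (2 * i₂) ∣ algebraMap O O₂ (N u) := by
      rw [hid]
      apply dvd_sub
      · exact (aux_up hw' i₂ (T u) hTu).mul_right u
      · have hu' : π₂ ^ i₂ ∣ u := (pow_dvd_pow π₂ (by omega)).trans ((memp₂ _ _).mp hu)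
        rw [two_mul, pow_add]
        exact mul_dvd_mul hu' hu'
    exact aux_down_even ha₂irr hπ₂ hw' i₂ (N u) hdvd
  -- T (η * u) is small
  have hTηu : a₂ ^ i₂ ∣ T (η * u) := by
    have hdvd : π₂ ^ (i₁ + i₂) ∣ η * u := ((memp₂ _ _).mp hu).mul_left η
    have := TB (i₁ + i₂) (η * u) hdvd
    exact (pow_dvd_pow a₂ (by omega)).trans this
  constructor
  · have hTu1 : T u ∈ (IsLocalRing.maximalIdeal O) ^ i₁ :=
      (memp _ _).mpr ((pow_dvd_pow a₂ hi₁).trans hTu)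
    constructor
    · intro h
      have heq : T η - a₁ = (T (η + u) - a₁) - T u := by rw [hTadd]; ring
      rw [heq]; exact Ideal.sub_mem _ h hTu1
    · intro h
      have heq : T (η + u) - a₁ = (T η - a₁) + T u := by rw [hTadd]; ring
      rw [heq]; exact Ideal.add_mem _ h hTu1
  · have hcor : N u + T η * T u - T (η * u) ∈ (IsLocalRing.maximalIdeal O) ^ i₂ := by
      apply Ideal.sub_mem
      · apply Ideal.add_mem
        · exact (memp _ _).mpr hNu
        · exact (memp _ _).mpr (hTu.mul_left (T η))
      · exact (memp _ _).mpr hTηu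
    constructor
    · intro h
      have heq : N η - a₂ = (N (η + u) - a₂) - (N u + T η * T u - T (η * u)) := by
        rw [hNadd]; ring
      rw [heq]; exact Ideal.sub_mem _ h hcor
    · intro h
      have heq : N (η + u) - a₂ = (N η - a₂) + (N u + T η * T u - T (η * u)) := by
        rw [hNadd]; ring
      rw [heq]; exact Ideal.add_mem _ h hcor
end
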